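/- arXiv:2510.17678 — 7 statements merged into one kernel-verified Lean document; each statement's English description precedes it below -/
import Mathlib

section
/- Let P : ℕ → ℚ be the sequence defined by P(0) = P(1) = 1 and, for n ≥ 2, P(n) = 2 + n(n−1)/286 + δ13(n mod 13) + δ11(n mod 11). Then in the formal power series ring ℚ⟦t⟧ one has (∑_{n≥0} P(n)·tⁿ)·(1−t)·(1−t¹¹)·(1−t²⁶)·(1−t³⁹) = 1 − t⁷⁸; equivalently, ∑_{n≥0} P(n)·tⁿ = (1−t⁷⁸)/((1−t)(1−t¹¹)(1−t²⁶)(1−t³⁹)). -/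
open PowerSeries

/-- Riemann–Roch correction term of the cyclic quotient singularity `1/13(1,6)`
evaluated at `n K`, as a function of `n mod 13`. -/
def delta13 : ℕ → ℚ
  | 0 => 0
  | 1 => 0
  | 2 => -6/13
  | 3 => -5/13
  | 4 => -10/13
  | 5 => -8/13
  | 6 => -12/13
  | 7 => -9/13
  | 8 => -12/13
  | 9 => -8/13
  | 10 => -10/13
  | 11 => -5/13
  | 12 => -6/13
  | _ => 0

/-- Riemann–Roch correction term of the cyclic quotient singularity `1/11(1,7)`
evaluated at `n K`, as a function of `n mod 11`. -/
def delta11 : ℕ → ℚ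
  | 0 => 0
  | 1 => 0
  | 2 => -6/11
  | 3 => -7/11
  | 4 => -3/11
  | 5 => -5/11
  | 6 => -2/11
  | 7 => -5/11
  | 8 => -3/11
  | 9 => -7/11
  | 10 => -6/11
  | _ => 0

set_option maxHeartbeats 1600000

def Q (n : ℕ) : ℚ :=
  if n ≤ 1 then 1 else 2 + (n : ℚ) * ((n : ℚ) - 1) / 286 + delta13 (n % 13) + delta11 (n % 11)

/-- The generating series of the plurigenera of a stable surface with `p_g = 1` and
`K² = 1/143` equals `(1 - t⁷⁸)/((1-t)(1-t¹¹)(1-t²⁶)(1-t³⁹))`. -/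
theorem statement0 (P : ℕ → ℚ) (hP0 : P 0 = 1) (hP1 : P 1 = 1)
    (hP : ∀ n : ℕ, 2 ≤ n →
      P n = 2 + (n : ℚ) * ((n : ℚ) - 1) / 286 + delta13 (n % 13) + delta11 (n % 11)) :
    (PowerSeries.mk P : PowerSeries ℚ) * (1 - X) * (1 - X ^ 11) * (1 - X ^ 26) * (1 - X ^ 39)
      = 1 - X ^ 78 := by
  have hPQ : ∀ m, P m = Q m := by
    intro m
    match m with
    | 0 => simpa [Q] using hP0
    | 1 => simpa [Q] using hP1
    | (k+2) => rw [hP (k+2) (by omega)]; simp [Q]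
  have hg : ((1 - X) * ((1 - X ^ 11) * ((1 - X ^ 26) * (1 - X ^ 39))) : PowerSeries ℚ)
      = 1 - X^1 - X^11 + X^12 - X^26 + X^27 + X^37 - X^38 - X^39 + X^40
      + X^50 - X^51 + X^65 - X^66 - X^76 + X^77 := by ring
  rw [mul_assoc, mul_assoc, mul_assoc, hg]
  ext n
  simp only [mul_sub, mul_add, mul_one, map_sub, map_add, coeff_mul_X_pow', coeff_mk,
    coeff_one, coeff_X_pow, hPQ]
  rcases lt_or_ge n 79 with h | h
  · interval_cases n <;> norm_num [Q, delta13, delta11]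
  · rw [if_pos (show (1:ℕ) ≤ n by omega), if_pos (show (11:ℕ) ≤ n by omega), if_pos (show (12:ℕ) ≤ n by omega), if_pos (show (26:ℕ) ≤ n by omega), if_pos (show (27:ℕ) ≤ n by omega), if_pos (show (37:ℕ) ≤ n by omega), if_pos (show (38:ℕ) ≤ n by omega), if_pos (show (39:ℕ) ≤ n by omega), if_pos (show (40:ℕ) ≤ n by omega), if_pos (show (50:ℕ) ≤ n by omega), if_pos (show (51:ℕ) ≤ n by omega), if_pos (show (65:ℕ) ≤ n by omega), if_pos (show (66:ℕ) ≤ n by omega), if_pos (show (76:ℕ) ≤ n by omega), if_pos (show (77:ℕ) ≤ n by omega), if_neg (show ¬n = 0 by omega), if_neg (show ¬n = 78 by omega)]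
    have hQ2 : ∀ m : ℕ, 2 ≤ m → Q m = 2 + (m:ℚ)*((m:ℚ)-1)/286 + delta13 (m%13) + delta11 (m%11) := by
      intro m hm; rw [Q, if_neg (by omega)]
    rw [hQ2 n (by omega), hQ2 (n - 1) (by omega), hQ2 (n - 11) (by omega), hQ2 (n - 12) (by omega), hQ2 (n - 26) (by omega), hQ2 (n - 27) (by omega), hQ2 (n - 37) (by omega), hQ2 (n - 38) (by omega), hQ2 (n - 39) (by omega), hQ2 (n - 40) (by omega), hQ2 (n - 50) (by omega), hQ2 (n - 51) (by omega), hQ2 (n - 65) (by omega), hQ2 (n - 66) (by omega), hQ2 (n - 76) (by omega), hQ2 (n - 77) (by omega)]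
    rw [(show (n - 26) % 13 = n % 13 by omega), (show (n - 27) % 13 = (n - 1) % 13 by omega), (show (n - 37) % 13 = (n - 11) % 13 by omega), (show (n - 38) % 13 = (n - 12) % 13 by omega), (show (n - 39) % 13 = n % 13 by omega), (show (n - 40) % 13 = (n - 1) % 13 by omega), (show (n - 50) % 13 = (n - 11) % 13 by omega), (show (n - 51) % 13 = (n - 12) % 13 by omega), (show (n - 65) % 13 = n % 13 by omega), (show (n - 66) % 13 = (n - 1) % 13 by omega), (show (n - 76) % 13 = (n - 11) % 13 by omega), (show (n - 77) % 13 = (n - 12) % 13 by omega), (show (n - 11) % 11 = n % 11 by omega), (show (n - 12) % 11 = (n - 1) % 11 by omega), (show (n - 37) % 11 = (n - 26) % 11 by omega), (show (n - 38) % 11 = (n - 27) % 11 by omega), (show (n - 50) % 11 = (n - 39) % 11 by omega), (show (n - 51) % 11 = (n - 40) % 11 by omega), (show (n - 66) % 11 = n % 11 by omega), (show (n - 76) % 11 = (n - 65) % 11 by omega), (show (n - 77) % 11 = n % 11 by omega)]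
    have c1 : ((n - 1 : ℕ):ℚ) = (n:ℚ) - 1 := by rw [Nat.cast_sub (by omega : 1 ≤ n)]; norm_num
    have c11 : ((n - 11 : ℕ):ℚ) = (n:ℚ) - 11 := by rw [Nat.cast_sub (by omega : 11 ≤ n)]; norm_num
    have c12 : ((n - 12 : ℕ):ℚ) = (n:ℚ) - 12 := by rw [Nat.cast_sub (by omega : 12 ≤ n)]; norm_num
    have c26 : ((n - 26 : ℕ):ℚ) = (n:ℚ) - 26 := by rw [Nat.cast_sub (by omega : 26 ≤ n)]; norm_num
    have c27 : ((n - 27 : ℕ):ℚ) = (n:ℚ) - 27 := by rw [Nat.cast_sub (by omega : 27 ≤ n)]; norm_num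
    have c37 : ((n - 37 : ℕ):ℚ) = (n:ℚ) - 37 := by rw [Nat.cast_sub (by omega : 37 ≤ n)]; norm_num
    have c38 : ((n - 38 : ℕ):ℚ) = (n:ℚ) - 38 := by rw [Nat.cast_sub (by omega : 38 ≤ n)]; norm_num
    have c39 : ((n - 39 : ℕ):ℚ) = (n:ℚ) - 39 := by rw [Nat.cast_sub (by omega : 39 ≤ n)]; norm_num
    have c40 : ((n - 40 : ℕ):ℚ) = (n:ℚ) - 40 := by rw [Nat.cast_sub (by omega : 40 ≤ n)]; norm_num
    have c50 : ((n - 50 : ℕ):ℚ) = (n:ℚ) - 50 := by rw [Nat.cast_sub (by omega : 50 ≤ n)]; norm_num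
    have c51 : ((n - 51 : ℕ):ℚ) = (n:ℚ) - 51 := by rw [Nat.cast_sub (by omega : 51 ≤ n)]; norm_num
    have c65 : ((n - 65 : ℕ):ℚ) = (n:ℚ) - 65 := by rw [Nat.cast_sub (by omega : 65 ≤ n)]; norm_num
    have c66 : ((n - 66 : ℕ):ℚ) = (n:ℚ) - 66 := by rw [Nat.cast_sub (by omega : 66 ≤ n)]; norm_num
    have c76 : ((n - 76 : ℕ):ℚ) = (n:ℚ) - 76 := by rw [Nat.cast_sub (by omega : 76 ≤ n)]; norm_num
    have c77 : ((n - 77 : ℕ):ℚ) = (n:ℚ) - 77 := by rw [Nat.cast_sub (by omega : 77 ≤ n)]; norm_num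
    rw [c1, c11, c12, c26, c27, c37, c38, c39, c40, c50, c51, c65, c66, c76, c77]
    ring
end

section
/- Let P : ℕ → ℚ be the sequence defined by P(0) = 1 and, for n ≥ 1, P(n) = 2 + n²/84 + δ2(n mod 2) + δ3(n mod 3) + δ7(n mod 7). Then in the formal power series ring ℚ⟦t⟧ one has (∑_{n≥0} P(n)·tⁿ)·(1−t)·(1−t⁶)·(1−t¹⁴)·(1−t²¹) = 1 − t⁴²; equivalently, ∑_{n≥0} P(n)·tⁿ = (1−t⁴²)/((1−t)(1−t⁶)(1−t¹⁴)(1−t²¹)). -/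
open PowerSeries

/-- Riemann–Roch correction term of the cyclic quotient singularity `1/2(1,1)`
evaluated at `n D`, as a function of `n mod 2`. -/
def delta2 : ℕ → ℚ
  | 0 => 0
  | 1 => -1/4
  | _ => 0

/-- Riemann–Roch correction term of the cyclic quotient singularity `1/3(1,2)`
evaluated at `n D`, as a function of `n mod 3`. -/
def delta3 : ℕ → ℚ
  | 0 => 0
  | 1 => -1/3
  | 2 => -1/3
  | _ => 0

/-- Riemann–Roch correction term of the cyclic quotient singularity `1/7(1,6)`
evaluated at `n D`, as a function of `n mod 7`. -/
def delta7 : ℕ → ℚ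
  | 0 => 0
  | 1 => -3/7
  | 2 => -5/7
  | 3 => -6/7
  | 4 => -6/7
  | 5 => -5/7
  | 6 => -3/7
  | _ => 0

set_option maxHeartbeats 8000000 in
theorem statement1_aux (P : ℕ → ℚ) (hP0 : P 0 = 1)
    (hP : ∀ n : ℕ, 1 ≤ n →
      P n = 2 + (n : ℚ) ^ 2 / 84 + delta2 (n % 2) + delta3 (n % 3) + delta7 (n % 7)) :
    (PowerSeries.mk P : PowerSeries ℚ) * (1 - X) * (1 - X ^ 6) * (1 - X ^ 14) * (1 - X ^ 21)
      = 1 - X ^ 42 := by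
  have hP' : ∀ n : ℕ, P n = if n = 0 then 1 else
      2 + (n : ℚ) ^ 2 / 84 + delta2 (n % 2) + delta3 (n % 3) + delta7 (n % 7) := by
    intro n
    rcases Nat.eq_zero_or_pos n with h | h
    · simp [h, hP0]
    · rw [hP n h, if_neg (by omega)]
  have key : ∀ n : ℕ, 43 ≤ n → P n = P (n - 42) + (n : ℚ) - 21 := by
    intro n hn
    obtain ⟨m, rfl⟩ : ∃ m, n = m + 43 := ⟨n - 43, by omega⟩
    rw [show m + 43 - 42 = m + 1 by omega, hP' (m + 43), hP' (m + 1),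
      if_neg (by omega), if_neg (by omega),
      show (m + 43) % 2 = (m + 1) % 2 by omega,
      show (m + 43) % 3 = (m + 1) % 3 by omega,
      show (m + 43) % 7 = (m + 1) % 7 by omega]
    push_cast
    ring
  have main : ∀ n : ℕ,
      P n - (if 1 ≤ n then P (n-1) else 0) - (if 6 ≤ n then P (n-6) else 0)
      + (if 7 ≤ n then P (n-7) else 0) - (if 14 ≤ n then P (n-14) else 0)
      + (if 15 ≤ n then P (n-15) else 0) + (if 20 ≤ n then P (n-20) else 0)
      - (if 21 ≤ n then P (n-21) else 0) - (if 21 ≤ n then P (n-21) else 0)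
      + (if 22 ≤ n then P (n-22) else 0) + (if 27 ≤ n then P (n-27) else 0)
      - (if 28 ≤ n then P (n-28) else 0) + (if 35 ≤ n then P (n-35) else 0)
      - (if 36 ≤ n then P (n-36) else 0) - (if 41 ≤ n then P (n-41) else 0)
      + (if 42 ≤ n then P (n-42) else 0)
      = (if n = 0 then 1 else 0) - (if n = 42 then 1 else 0) := by
    intro n
    induction n using Nat.strong_induction_on with
    | _ n ih =>
      rcases le_or_gt n 84 with h | h
      · interval_cases n <;>
          norm_num [hP', delta2, delta3, delta7]
      · have ih' := ih (n - 42) (by omega)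
        obtain ⟨m, rfl⟩ : ∃ m, n = m + 85 := ⟨n - 85, by omega⟩
        rw [show m + 85 - 42 = m + 43 by omega] at ih'
        rw [if_pos (by omega : 1 ≤ m + 43), if_pos (by omega : 6 ≤ m + 43),
          if_pos (by omega : 7 ≤ m + 43), if_pos (by omega : 14 ≤ m + 43),
          if_pos (by omega : 15 ≤ m + 43), if_pos (by omega : 20 ≤ m + 43),
          if_pos (by omega : 21 ≤ m + 43), if_pos (by omega : 22 ≤ m + 43),
          if_pos (by omega : 27 ≤ m + 43), if_pos (by omega : 28 ≤ m + 43),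
          if_pos (by omega : 35 ≤ m + 43), if_pos (by omega : 36 ≤ m + 43),
          if_pos (by omega : 41 ≤ m + 43), if_pos (by omega : 42 ≤ m + 43),
          if_neg (by omega : ¬ m + 43 = 0), if_neg (by omega : ¬ m + 43 = 42),
          show m + 43 - 1 = m + 42 by omega, show m + 43 - 6 = m + 37 by omega,
          show m + 43 - 7 = m + 36 by omega, show m + 43 - 14 = m + 29 by omega,
          show m + 43 - 15 = m + 28 by omega, show m + 43 - 20 = m + 23 by omega,
          show m + 43 - 21 = m + 22 by omega, show m + 43 - 22 = m + 21 by omega,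
          show m + 43 - 27 = m + 16 by omega, show m + 43 - 28 = m + 15 by omega,
          show m + 43 - 35 = m + 8 by omega, show m + 43 - 36 = m + 7 by omega,
          show m + 43 - 41 = m + 2 by omega, show m + 43 - 42 = m + 1 by omega] at ih'
        rw [if_pos (by omega : 1 ≤ m + 85), if_pos (by omega : 6 ≤ m + 85),
          if_pos (by omega : 7 ≤ m + 85), if_pos (by omega : 14 ≤ m + 85),
          if_pos (by omega : 15 ≤ m + 85), if_pos (by omega : 20 ≤ m + 85),
          if_pos (by omega : 21 ≤ m + 85), if_pos (by omega : 22 ≤ m + 85),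
          if_pos (by omega : 27 ≤ m + 85), if_pos (by omega : 28 ≤ m + 85),
          if_pos (by omega : 35 ≤ m + 85), if_pos (by omega : 36 ≤ m + 85),
          if_pos (by omega : 41 ≤ m + 85), if_pos (by omega : 42 ≤ m + 85),
          if_neg (by omega : ¬ m + 85 = 0), if_neg (by omega : ¬ m + 85 = 42),
          show m + 85 - 1 = m + 84 by omega, show m + 85 - 6 = m + 79 by omega,
          show m + 85 - 7 = m + 78 by omega, show m + 85 - 14 = m + 71 by omega,
          show m + 85 - 15 = m + 70 by omega, show m + 85 - 20 = m + 65 by omega,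
          show m + 85 - 21 = m + 64 by omega, show m + 85 - 22 = m + 63 by omega,
          show m + 85 - 27 = m + 58 by omega, show m + 85 - 28 = m + 57 by omega,
          show m + 85 - 35 = m + 50 by omega, show m + 85 - 36 = m + 49 by omega,
          show m + 85 - 41 = m + 44 by omega, show m + 85 - 42 = m + 43 by omega,
          key (m + 85) (by omega), key (m + 84) (by omega), key (m + 79) (by omega),
          key (m + 78) (by omega), key (m + 71) (by omega), key (m + 70) (by omega),
          key (m + 65) (by omega), key (m + 64) (by omega), key (m + 63) (by omega),
          key (m + 58) (by omega), key (m + 57) (by omega), key (m + 50) (by omega),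
          key (m + 49) (by omega), key (m + 44) (by omega), key (m + 43) (by omega)]
        rw [show m + 85 - 42 = m + 43 by omega, show m + 84 - 42 = m + 42 by omega,
          show m + 79 - 42 = m + 37 by omega, show m + 78 - 42 = m + 36 by omega,
          show m + 71 - 42 = m + 29 by omega, show m + 70 - 42 = m + 28 by omega,
          show m + 65 - 42 = m + 23 by omega, show m + 64 - 42 = m + 22 by omega,
          show m + 63 - 42 = m + 21 by omega, show m + 58 - 42 = m + 16 by omega,
          show m + 57 - 42 = m + 15 by omega, show m + 50 - 42 = m + 8 by omega,
          show m + 49 - 42 = m + 7 by omega, show m + 44 - 42 = m + 2 by omega,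
          show m + 43 - 42 = m + 1 by omega]
        push_cast at ih' ⊢
        linarith [ih']
  have hexp : (PowerSeries.mk P : PowerSeries ℚ) * (1 - X) * (1 - X ^ 6) * (1 - X ^ 14)
      * (1 - X ^ 21)
      = PowerSeries.mk P - PowerSeries.mk P * X ^ 1 - PowerSeries.mk P * X ^ 6
        + PowerSeries.mk P * X ^ 7 - PowerSeries.mk P * X ^ 14 + PowerSeries.mk P * X ^ 15
        + PowerSeries.mk P * X ^ 20 - PowerSeries.mk P * X ^ 21 - PowerSeries.mk P * X ^ 21
        + PowerSeries.mk P * X ^ 22 + PowerSeries.mk P * X ^ 27 - PowerSeries.mk P * X ^ 28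
        + PowerSeries.mk P * X ^ 35 - PowerSeries.mk P * X ^ 36 - PowerSeries.mk P * X ^ 41
        + PowerSeries.mk P * X ^ 42 := by ring
  rw [hexp]
  ext n
  simp only [map_sub, map_add, coeff_mul_X_pow', coeff_mk, coeff_one, coeff_X_pow]
  exact main n

/-- The generating series of the plurigenera of a stable surface pair `(X, D)` with
`K_X ∼ 0`, `p_g(X,D) = 1` and `(K_X + D)² = 1/42` equals
`(1 - t⁴²)/((1-t)(1-t⁶)(1-t¹⁴)(1-t²¹))`. -/
theorem statement1 (P : ℕ → ℚ) (hP0 : P 0 = 1)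
    (hP : ∀ n : ℕ, 1 ≤ n →
      P n = 2 + (n : ℚ) ^ 2 / 84 + delta2 (n % 2) + delta3 (n % 3) + delta7 (n % 7)) :
    (PowerSeries.mk P : PowerSeries ℚ) * (1 - X) * (1 - X ^ 6) * (1 - X ^ 14) * (1 - X ^ 21)
      = 1 - X ^ 42 := by
  exact statement1_aux P hP0 hP
end

section
/- Let f ∈ ℂ[w,x,y,z] be a nonzero polynomial that is weighted homogeneous of degree 42 with respect to the weights (w,x,y,z) ↦ (1,6,14,21). Then for every n ≥ 1 the ℂ-dimension of the n-th weighted-graded piece of the quotient ring ℂ[w,x,y,z]/(f) (i.e., of the image of the space of weighted-homogeneous polynomials of degree n under the quotient map) equals 2 + n²/84 + δ2(n mod 2) + δ3(n mod 3) + δ7(n mod 7), and for n = 0 it equals 1. -/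
set_option maxRecDepth 100000
set_option maxHeartbeats 2000000
set_option synthInstance.maxHeartbeats 400000


open MvPolynomial

/-- The weights `(1, 6, 14, 21)` on the four variables `w, x, y, z`. -/
def wts : Fin 4 → ℕ := ![1, 6, 14, 21]

/-- The dimension of the `n`-th weighted-graded piece of `ℂ[w,x,y,z]/(f)`, i.e. of the image
of the weighted-homogeneous polynomials of degree `n` under the quotient map. -/
noncomputable def gradedPieceDim (f : MvPolynomial (Fin 4) ℂ) (n : ℕ) : ℕ :=
  Module.finrank ℂ
    ↥(Submodule.map (Ideal.Quotient.mkₐ ℂ (Ideal.span {f})).toLinearMap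
        (weightedHomogeneousSubmodule ℂ wts n))

open Finset


def wsum : ℕ × ℕ × ℕ × ℕ → ℕ
  | (a, b, c, d) => a + 6*b + 14*c + 21*d

lemma wsum_mk (a b c d : ℕ) : wsum (a,b,c,d) = a + 6*b + 14*c + 21*d := rfl

def qbox (n : ℕ) : Finset (ℕ × ℕ × ℕ × ℕ) :=
  range (n+1) ×ˢ range (n+1) ×ˢ range (n+1) ×ˢ range (n+1)

lemma mem_qbox {n a b c d : ℕ} :
    (a,b,c,d) ∈ qbox n ↔ a ≤ n ∧ b ≤ n ∧ c ≤ n ∧ d ≤ n := by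
  unfold qbox
  simp [Finset.mem_product, Nat.lt_succ_iff]

def Nc (n : ℕ) : ℕ := ((qbox n).filter (fun p => wsum p = n)).card
def Gc (n : ℕ) : ℕ := ((qbox n).filter (fun p => wsum p = n ∧ p.1 < 42)).card
def Uc (n : ℕ) : ℕ := ((qbox n).filter (fun p => wsum p = n ∧ p.1 < 42 ∧ p.2.1 < 7)).card
def Wq (n : ℕ) : ℕ :=
  ((qbox n).filter (fun p => wsum p = n ∧ p.1 < 42 ∧ p.2.1 < 7 ∧ p.2.2.1 < 3)).card

def Wc (n : ℕ) : ℕ :=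
  ((range 42 ×ˢ range 7 ×ˢ range 3).filter
    (fun t => t.1 + 6*t.2.1 + 14*t.2.2 ≤ n ∧ (n - (t.1 + 6*t.2.1 + 14*t.2.2)) % 21 = 0)).card

lemma Nc_def (n : ℕ) : Nc n = ((qbox n).filter (fun p => wsum p = n)).card := rfl
lemma Gc_def (n : ℕ) : Gc n = ((qbox n).filter (fun p => wsum p = n ∧ p.1 < 42)).card := rfl
lemma Uc_def (n : ℕ) :
    Uc n = ((qbox n).filter (fun p => wsum p = n ∧ p.1 < 42 ∧ p.2.1 < 7)).card := rfl
lemma Wq_def (n : ℕ) :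
    Wq n = ((qbox n).filter (fun p => wsum p = n ∧ p.1 < 42 ∧ p.2.1 < 7 ∧ p.2.2.1 < 3)).card :=
  rfl

lemma Nsplit (n : ℕ) (hn : 42 ≤ n) : Nc n = Nc (n - 42) + Gc n := by
  classical
  have key := Finset.card_filter_add_card_filter_not
    (s := (qbox n).filter (fun p => wsum p = n)) (p := fun p => p.1 < 42)
  rw [Finset.filter_filter, Finset.filter_filter] at key
  have h1 : ((qbox n).filter (fun p => wsum p = n ∧ p.1 < 42)).card = Gc n := (Gc_def n).symm
  have h2 : ((qbox n).filter (fun p => wsum p = n ∧ ¬ p.1 < 42)).card = Nc (n - 42) := by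
    rw [Nc_def]
    apply card_nbij' (fun p => (p.1 - 42, p.2.1, p.2.2.1, p.2.2.2))
      (fun p => (p.1 + 42, p.2.1, p.2.2.1, p.2.2.2))
    · rintro ⟨a, b, c, d⟩ hp
      simp only [mem_coe, mem_filter, mem_qbox, wsum_mk] at hp ⊢
      omega
    · rintro ⟨a, b, c, d⟩ hp
      simp only [mem_coe, mem_filter, mem_qbox, wsum_mk] at hp ⊢
      omega
    · rintro ⟨a, b, c, d⟩ hp
      simp only [mem_coe, mem_filter, mem_qbox, wsum_mk] at hp
      simp only [Prod.mk.injEq, and_true, true_and]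
      omega
    · rintro ⟨a, b, c, d⟩ hp
      simp only [mem_coe, mem_filter, mem_qbox, wsum_mk] at hp
      simp only [Prod.mk.injEq, and_true, true_and]
      omega
  rw [h1, h2] at key
  rw [Nc_def]
  omega

lemma Gsplit (n : ℕ) (hn : 42 ≤ n) : Gc n = Gc (n - 42) + Uc n := by
  classical
  have key := Finset.card_filter_add_card_filter_not
    (s := (qbox n).filter (fun p => wsum p = n ∧ p.1 < 42)) (p := fun p => p.2.1 < 7)
  rw [Finset.filter_filter, Finset.filter_filter] at key
  have h1 : ((qbox n).filter (fun p => (wsum p = n ∧ p.1 < 42) ∧ p.2.1 < 7)).card = Uc n := by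
    rw [Uc_def]
    apply congrArg
    apply Finset.filter_congr
    rintro ⟨a, b, c, d⟩ _
    simp only [wsum_mk]
    omega
  have h2 : ((qbox n).filter (fun p => (wsum p = n ∧ p.1 < 42) ∧ ¬ p.2.1 < 7)).card
      = Gc (n - 42) := by
    rw [Gc_def]
    apply card_nbij' (fun p => (p.1, p.2.1 - 7, p.2.2.1, p.2.2.2))
      (fun p => (p.1, p.2.1 + 7, p.2.2.1, p.2.2.2))
    · rintro ⟨a, b, c, d⟩ hp
      simp only [mem_coe, mem_filter, mem_qbox, wsum_mk] at hp ⊢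
      omega
    · rintro ⟨a, b, c, d⟩ hp
      simp only [mem_coe, mem_filter, mem_qbox, wsum_mk] at hp ⊢
      omega
    · rintro ⟨a, b, c, d⟩ hp
      simp only [mem_coe, mem_filter, mem_qbox, wsum_mk] at hp
      simp only [Prod.mk.injEq, and_true, true_and]
      omega
    · rintro ⟨a, b, c, d⟩ hp
      simp only [mem_coe, mem_filter, mem_qbox, wsum_mk] at hp
      simp only [Prod.mk.injEq, and_true, true_and]
      omega
  rw [h1, h2] at key
  rw [Gc_def]
  omega

lemma Usplit (n : ℕ) (hn : 42 ≤ n) : Uc n = Uc (n - 42) + Wq n := by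
  classical
  have key := Finset.card_filter_add_card_filter_not
    (s := (qbox n).filter (fun p => wsum p = n ∧ p.1 < 42 ∧ p.2.1 < 7))
    (p := fun p => p.2.2.1 < 3)
  rw [Finset.filter_filter, Finset.filter_filter] at key
  have h1 : ((qbox n).filter
      (fun p => (wsum p = n ∧ p.1 < 42 ∧ p.2.1 < 7) ∧ p.2.2.1 < 3)).card = Wq n := by
    rw [Wq_def]
    apply congrArg
    apply Finset.filter_congr
    rintro ⟨a, b, c, d⟩ _
    simp only [wsum_mk]
    omega
  have h2 : ((qbox n).filter
      (fun p => (wsum p = n ∧ p.1 < 42 ∧ p.2.1 < 7) ∧ ¬ p.2.2.1 < 3)).card = Uc (n - 42) := by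
    rw [Uc_def]
    apply card_nbij' (fun p => (p.1, p.2.1, p.2.2.1 - 3, p.2.2.2))
      (fun p => (p.1, p.2.1, p.2.2.1 + 3, p.2.2.2))
    · rintro ⟨a, b, c, d⟩ hp
      simp only [mem_coe, mem_filter, mem_qbox, wsum_mk] at hp ⊢
      omega
    · rintro ⟨a, b, c, d⟩ hp
      simp only [mem_coe, mem_filter, mem_qbox, wsum_mk] at hp ⊢
      omega
    · rintro ⟨a, b, c, d⟩ hp
      simp only [mem_coe, mem_filter, mem_qbox, wsum_mk] at hp
      simp only [Prod.mk.injEq, and_true, true_and]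
      omega
    · rintro ⟨a, b, c, d⟩ hp
      simp only [mem_coe, mem_filter, mem_qbox, wsum_mk] at hp
      simp only [Prod.mk.injEq, and_true, true_and]
      omega
  rw [h1, h2] at key
  rw [Uc_def]
  omega

lemma WqWc (n : ℕ) : Wq n = Wc n := by
  classical
  rw [Wq_def, Wc]
  apply card_nbij' (fun p => (p.1, p.2.1, p.2.2.1))
      (fun t => (t.1, t.2.1, t.2.2, (n - (t.1 + 6*t.2.1 + 14*t.2.2)) / 21))
  · rintro ⟨a, b, c, d⟩ hp
    simp only [mem_coe, mem_filter, mem_qbox, wsum_mk] at hp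
    simp only [mem_coe, mem_filter, mem_product, mem_range]
    omega
  · rintro ⟨a, b, c⟩ ht
    simp only [mem_coe, mem_filter, mem_product, mem_range] at ht
    simp only [mem_coe, mem_filter, mem_qbox, wsum_mk]
    omega
  · rintro ⟨a, b, c, d⟩ hp
    simp only [mem_coe, mem_filter, mem_qbox, wsum_mk] at hp
    simp only [Prod.mk.injEq, and_true, true_and]
    omega
  · rintro ⟨a, b, c⟩ ht
    simp only [mem_coe, mem_filter, mem_product, mem_range] at ht
    simp only [Prod.mk.injEq, and_true, true_and]
    try omega

lemma GUsmall (n : ℕ) (hn : n ≤ 41) : Gc n = Uc n := by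
  rw [Gc_def, Uc_def]
  apply congrArg
  apply Finset.filter_congr
  rintro ⟨a, b, c, d⟩ _
  simp only [wsum_mk]
  omega

lemma UWsmall (n : ℕ) (hn : n ≤ 41) : Uc n = Wq n := by
  rw [Uc_def, Wq_def]
  apply congrArg
  apply Finset.filter_congr
  rintro ⟨a, b, c, d⟩ _
  simp only [wsum_mk]
  omega

lemma NGsmall (n : ℕ) (hn : n ≤ 41) : Nc n = Gc n := by
  rw [Nc_def, Gc_def]
  apply congrArg
  apply Finset.filter_congr
  rintro ⟨a, b, c, d⟩ _
  simp only [wsum_mk]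
  omega

lemma Wcshift (n : ℕ) (hn : 106 ≤ n) : Wc n = Wc (n - 21) := by
  rw [Wc, Wc]
  apply congrArg
  apply Finset.filter_congr
  rintro ⟨a, b, c⟩ ht
  simp only [mem_product, mem_range] at ht
  simp only
  omega

lemma Wcbase : ∀ m, m < 126 → 85 ≤ m → Wc m = 42 := by decide
lemma Ucbase : ∀ m, m < 84 → 43 ≤ m → Wc (m - 42) + Wc m = m - 21 := by decide
lemma Wc0 : Wc 0 = 1 := by decide
lemma Wc42 : Wc 42 = 21 := by decide
lemma Wc84 : Wc 84 = 41 := by decide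

lemma Wc42all (n : ℕ) (hn : 85 ≤ n) : Wc n = 42 := by
  induction n using Nat.strong_induction_on with
  | _ n ih =>
    rcases lt_or_ge n 126 with h | h
    · exact Wcbase n h hn
    · rw [Wcshift n (by omega)]
      exact ih (n - 21) (by omega) (by omega)

lemma UeqWc (m : ℕ) (hm : m ≤ 41) : Uc m = Wc m := by
  rw [UWsmall m hm, WqWc]

lemma Uc42 : Uc 42 = 22 := by
  rw [Usplit 42 le_rfl, WqWc]
  norm_num [UeqWc 0 (by omega), Wc0, Wc42]

lemma Ulin (n : ℕ) (hn : 43 ≤ n) : Uc n = n - 21 := by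
  induction n using Nat.strong_induction_on with
  | _ n ih =>
    rcases lt_or_ge n 84 with h | h
    · rw [Usplit n (by omega), WqWc, UeqWc (n - 42) (by omega)]
      exact Ucbase n h hn
    · rcases eq_or_lt_of_le h with h84 | h85
      · rw [← h84, Usplit 84 (by omega), WqWc]
        norm_num [Uc42, Wc84]
      · rw [Usplit n (by omega), WqWc, ih (n - 42) (by omega) (by omega),
          Wc42all n (by omega)]
        omega

-- key division lemma
lemma key_div {f p : MvPolynomial (Fin 4) ℂ} {n : ℕ}
    (hf : IsWeightedHomogeneous wts f 42) (hp : IsWeightedHomogeneous wts p n)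
    (g : MvPolynomial (Fin 4) ℂ) (hpg : p = f * g) :
    (42 ≤ n → p = f * weightedHomogeneousComponent wts (n - 42) g) ∧ (n < 42 → p = 0) := by
  classical
  have hsupp : (Function.support fun m => weightedHomogeneousComponent wts m g).Finite :=
    weightedHomogeneousComponent_finsupp g
  have hsupp2 : (Function.support fun m => f * weightedHomogeneousComponent wts m g).Finite :=
    hsupp.subset (by
      intro m hm
      simp only [Function.mem_support] at hm ⊢
      intro h
      apply hm
      rw [h, mul_zero])
  have hfg : p = ∑ᶠ m, f * weightedHomogeneousComponent wts m g := by
    rw [hpg, ← mul_finsum _ f, sum_weightedHomogeneousComponent]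
  have hcomp : ∀ m : ℕ,
      weightedHomogeneousComponent wts n (f * weightedHomogeneousComponent wts m g)
        = if 42 + m = n then f * weightedHomogeneousComponent wts m g else 0 := by
    intro m
    have hm : IsWeightedHomogeneous wts (f * weightedHomogeneousComponent wts m g) (42 + m) :=
      hf.mul (weightedHomogeneousComponent_isWeightedHomogeneous m g)
    split_ifs with h
    · rw [← h]
      exact weightedHomogeneousComponent_eq_self hm
    · rw [weightedHomogeneousComponent_of_mem hm, if_neg (Ne.symm h)]
  have hpn : p = ∑ᶠ m, weightedHomogeneousComponent wts n
      (f * weightedHomogeneousComponent wts m g) := by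
    conv_lhs => rw [← weightedHomogeneousComponent_eq_self hp, hfg]
    exact (weightedHomogeneousComponent wts n).toAddMonoidHom.map_finsum hsupp2
  constructor
  · intro hn
    rw [hpn, finsum_eq_single _ (n - 42)]
    · rw [hcomp, if_pos (by omega)]
    · intro m hm
      rw [hcomp, if_neg (by omega)]
  · intro hn
    rw [hpn]
    have hz : ∀ m : ℕ, weightedHomogeneousComponent wts n
        (f * weightedHomogeneousComponent wts m g) = 0 := by
      intro m
      rw [hcomp, if_neg (by omega)]
    simp only [hz]
    exact finsum_zero

lemma weight_apply4 (d : Fin 4 →₀ ℕ) :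
    (Finsupp.weight wts) d = d 0 + 6 * (d 1) + 14 * (d 2) + 21 * (d 3) := by
  rw [Finsupp.weight_apply, Finsupp.sum_fintype]
  · rw [Fin.sum_univ_four]
    simp [wts, smul_eq_mul]
    ring
  · intro i
    simp

lemma wts_ne_zero : ∀ x, wts x ≠ 0 := by decide

lemma setfin (n : ℕ) : {d : Fin 4 →₀ ℕ | (Finsupp.weight wts) d = n}.Finite := by
  apply Set.Finite.subset (Finsupp.finite_of_nat_weight_le wts wts_ne_zero n)
  intro d hd
  simp only [Set.mem_setOf_eq] at hd ⊢
  omega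

lemma card_set_eq_Nc (n : ℕ) :
    (setfin n).toFinset.card = Nc n := by
  classical
  rw [Nc_def]
  apply card_nbij' (fun d => (d 0, d 1, d 2, d 3))
    (fun p => Finsupp.equivFunOnFinite.symm ![p.1, p.2.1, p.2.2.1, p.2.2.2])
  · intro d hd
    simp only [mem_coe, Set.Finite.mem_toFinset, Set.mem_setOf_eq, weight_apply4] at hd
    simp only [mem_coe, mem_filter, mem_qbox, wsum_mk]
    omega
  · rintro ⟨a, b, c, d⟩ hp
    simp only [mem_coe, mem_filter, mem_qbox, wsum_mk] at hp
    simp only [mem_coe, Set.Finite.mem_toFinset, Set.mem_setOf_eq, weight_apply4,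
      Finsupp.coe_equivFunOnFinite_symm]
    simp only [Matrix.cons_val_zero, Matrix.cons_val_one, Matrix.head_cons,
      Matrix.cons_val_two, Matrix.tail_cons, Matrix.cons_val_three]
    omega
  · intro d _
    ext x
    simp only [Finsupp.coe_equivFunOnFinite_symm]
    fin_cases x <;> simp
  · rintro ⟨a, b, c, d⟩ _
    simp only [Finsupp.coe_equivFunOnFinite_symm, Prod.mk.injEq]
    refine ⟨?_, ?_, ?_, ?_⟩ <;> simp

noncomputable instance (n : ℕ) : Fintype {d : Fin 4 →₀ ℕ | (Finsupp.weight wts) d = n} :=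
  (setfin n).fintype

lemma finrank_V (n : ℕ) :
    Module.finrank ℂ ↥(weightedHomogeneousSubmodule ℂ wts n) = Nc n := by
  classical
  rw [weightedHomogeneousSubmodule_eq_finsupp_supported]
  have e := AddMonoidAlgebra.supportedEquivFinsupp (R := ℂ) (S := ℂ)
    {d : Fin 4 →₀ ℕ | (Finsupp.weight wts) d = n}
  have h2 : Module.finrank ℂ (↑{d : Fin 4 →₀ ℕ | (Finsupp.weight wts) d = n} →₀ ℂ) = Nc n := by
    rw [Module.finrank_finsupp_self, ← card_set_eq_Nc n, Set.Finite.card_toFinset]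
  exact e.finrank_eq.trans h2

lemma finiteDim_V (n : ℕ) :
    FiniteDimensional ℂ ↥(weightedHomogeneousSubmodule ℂ wts n) := by
  classical
  have e0 := LinearEquiv.ofEq _ _
    (weightedHomogeneousSubmodule_eq_finsupp_supported ℂ wts n)
  have e1 := e0.trans (AddMonoidAlgebra.supportedEquivFinsupp (R := ℂ) (S := ℂ)
    {d : Fin 4 →₀ ℕ | (Finsupp.weight wts) d = n})
  exact Module.Finite.equiv e1.symm

lemma dim_piece (f : MvPolynomial (Fin 4) ℂ) (hf0 : f ≠ 0)
    (hf : IsWeightedHomogeneous wts f 42) (n : ℕ) :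
    Module.finrank ℂ
        ↥(Submodule.map (Ideal.Quotient.mkₐ ℂ (Ideal.span {f})).toLinearMap
          (weightedHomogeneousSubmodule ℂ wts n))
      + (if 42 ≤ n then Nc (n - 42) else 0) = Nc n := by
  classical
  set I := Ideal.span {f} with hI
  set q := (Ideal.Quotient.mkₐ ℂ I).toLinearMap with hq
  set V := weightedHomogeneousSubmodule ℂ wts n with hV
  haveI : FiniteDimensional ℂ V := finiteDim_V n
  set L : V →ₗ[ℂ] (MvPolynomial (Fin 4) ℂ ⧸ I) := q.comp V.subtype with hL
  have hrange : LinearMap.range L = Submodule.map q V := by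
    rw [hL, LinearMap.range_comp, Submodule.range_subtype]
  have hrn := LinearMap.finrank_range_add_finrank_ker L
  rw [finrank_V n] at hrn
  rw [← hrange]
  have hker_mem : ∀ x : V, x ∈ LinearMap.ker L ↔ (x : MvPolynomial (Fin 4) ℂ) ∈ I := by
    intro x
    rw [LinearMap.mem_ker, hL, LinearMap.comp_apply]
    exact Ideal.Quotient.eq_zero_iff_mem
  by_cases hn : 42 ≤ n
  · rw [if_pos hn]
    -- kernel is equivalent to the degree (n - 42) part
    set V' := weightedHomogeneousSubmodule ℂ wts (n - 42) with hV'
    have hmul_mem : ∀ g : V', f * (g : MvPolynomial (Fin 4) ℂ) ∈ V := by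
      intro g
      have := hf.mul g.2
      rwa [show 42 + (n - 42) = n by omega] at this
    have hmul_ker : ∀ g : V',
        (⟨f * (g : MvPolynomial (Fin 4) ℂ), hmul_mem g⟩ : V) ∈ LinearMap.ker L := by
      intro g
      rw [hker_mem]
      exact Ideal.mem_span_singleton.mpr ⟨g, rfl⟩
    set M : V' →ₗ[ℂ] LinearMap.ker L :=
      { toFun := fun g => ⟨⟨f * (g : MvPolynomial (Fin 4) ℂ), hmul_mem g⟩, hmul_ker g⟩
        map_add' := by
          intro g h
          apply Subtype.ext
          apply Subtype.ext
          simp [mul_add]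
        map_smul' := by
          intro c g
          apply Subtype.ext
          apply Subtype.ext
          simp [mul_smul_comm] } with hM
    have hMbij : Function.Bijective M := by
      constructor
      · intro g h hgh
        apply Subtype.ext
        have : f * (g : MvPolynomial (Fin 4) ℂ) = f * (h : MvPolynomial (Fin 4) ℂ) := by
          have := congrArg (fun x : ↥(LinearMap.ker L) => ((x : V) : MvPolynomial (Fin 4) ℂ)) hgh
          simpa [hM] using this
        exact mul_left_cancel₀ hf0 this
      · rintro ⟨⟨p, hpV⟩, hpker⟩
        have hpI : p ∈ I := (hker_mem ⟨p, hpV⟩).mp hpker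
        obtain ⟨g, hg⟩ := Ideal.mem_span_singleton.mp hpI
        have hkey := (key_div hf hpV g hg).1 hn
        refine ⟨⟨weightedHomogeneousComponent wts (n - 42) g,
          weightedHomogeneousComponent_mem wts g (n - 42)⟩, ?_⟩
        apply Subtype.ext
        apply Subtype.ext
        exact hkey.symm
    have hkerrank : Module.finrank ℂ ↥(LinearMap.ker L) = Nc (n - 42) := by
      rw [← finrank_V (n - 42)]
      exact (LinearEquiv.ofBijective M hMbij).finrank_eq.symm
    rw [hkerrank] at hrn
    exact hrn
  · rw [if_neg hn, add_zero]
    have hker : LinearMap.ker L = ⊥ := by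
      rw [eq_bot_iff]
      intro x hx
      have hpI : (x : MvPolynomial (Fin 4) ℂ) ∈ I := (hker_mem x).mp hx
      obtain ⟨g, hg⟩ := Ideal.mem_span_singleton.mp hpI
      have := (key_div hf x.2 g hg).2 (by omega)
      simp only [Submodule.mem_bot]
      exact Subtype.ext this
    rw [hker] at hrn
    rw [finrank_bot ℂ ↥V, add_zero] at hrn
    exact hrn

-- numeric tables
def e2t : ℕ → ℕ
  | 0 => 0
  | 1 => 21
  | _ => 0

def e3t : ℕ → ℕ
  | 0 => 0
  | 1 => 28
  | 2 => 28
  | _ => 0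

def e7t : ℕ → ℕ
  | 0 => 0
  | 1 => 36
  | 2 => 60
  | 3 => 72
  | 4 => 72
  | 5 => 60
  | 6 => 36
  | _ => 0

lemma WcRbase : ∀ n, n < 42 → 1 ≤ n →
    84 * Wc n + e2t (n % 2) + e3t (n % 3) + e7t (n % 7) = 168 + n^2 := by decide

lemma d2cast : ∀ m, m < 2 → delta2 m = -(e2t m : ℚ)/84 := by
  intro m hm
  interval_cases m <;> norm_num [delta2, e2t]

lemma d3cast : ∀ m, m < 3 → delta3 m = -(e3t m : ℚ)/84 := by
  intro m hm
  interval_cases m <;> norm_num [delta3, e3t]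

lemma d7cast : ∀ m, m < 7 → delta7 m = -(e7t m : ℚ)/84 := by
  intro m hm
  interval_cases m <;> norm_num [delta7, e7t]

lemma Gc0 : Gc 0 = 1 := by
  rw [GUsmall 0 (by omega), UeqWc 0 (by omega), Wc0]

lemma Gfinal (n : ℕ) (hn : 1 ≤ n) :
    (Gc n : ℚ) = 2 + (n : ℚ)^2/84 + delta2 (n%2) + delta3 (n%3) + delta7 (n%7) := by
  induction n using Nat.strong_induction_on with
  | _ n ih =>
    rcases lt_or_ge n 42 with h | h
    · have hG : Gc n = Wc n := by rw [GUsmall n (by omega), UeqWc n (by omega)]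
      have hb := WcRbase n h hn
      have hbQ : 84 * (Wc n : ℚ) + (e2t (n%2) : ℚ) + (e3t (n%3) : ℚ) + (e7t (n%7) : ℚ)
          = 168 + (n:ℚ)^2 := by exact_mod_cast hb
      rw [hG, d2cast _ (Nat.mod_lt _ (by norm_num)), d3cast _ (Nat.mod_lt _ (by norm_num)),
        d7cast _ (Nat.mod_lt _ (by norm_num))]
      linarith
    · rcases eq_or_lt_of_le h with h42 | h43
      · rw [← h42]
        have hs := Gsplit 42 le_rfl
        norm_num [Gc0, Uc42] at hs
        rw [hs]
        norm_num [delta2, delta3, delta7]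
      · have hs := Gsplit n (by omega)
        have hu := Ulin n (by omega)
        have ih' := ih (n - 42) (by omega) (by omega)
        have hm2 : (n - 42) % 2 = n % 2 := by omega
        have hm3 : (n - 42) % 3 = n % 3 := by omega
        have hm7 : (n - 42) % 7 = n % 7 := by omega
        rw [hm2, hm3, hm7] at ih'
        have hcast : (Gc n : ℚ) = (Gc (n - 42) : ℚ) + (Uc n : ℚ) := by
          rw [hs]; push_cast; ring
        rw [hcast, ih', hu]
        have h1 : ((n - 21 : ℕ) : ℚ) = (n : ℚ) - 21 := by
          have : (21:ℕ) ≤ n := by omega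
          push_cast [this]; ring
        have h2 : ((n - 42 : ℕ) : ℚ) = (n : ℚ) - 42 := by
          have : (42:ℕ) ≤ n := by omega
          push_cast [this]; ring
        rw [h1, h2]
        ring

lemma gpd_eq (f : MvPolynomial (Fin 4) ℂ) (hf0 : f ≠ 0)
    (hf : IsWeightedHomogeneous wts f 42) (n : ℕ) :
    gradedPieceDim f n = Gc n := by
  have h := dim_piece f hf0 hf n
  rw [gradedPieceDim]
  rcases lt_or_ge n 42 with hn | hn
  · rw [if_neg (by omega), add_zero] at h
    rw [NGsmall n (by omega)] at h
    exact h
  · rw [if_pos hn] at h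
    have h2 := Nsplit n hn
    omega

/-- Hilbert function of a hypersurface of weighted degree `42` in `ℙ(1,6,14,21)`. -/
theorem statement2 (f : MvPolynomial (Fin 4) ℂ) (hf0 : f ≠ 0)
    (hf : IsWeightedHomogeneous wts f 42) :
    (∀ n : ℕ, 1 ≤ n →
      (gradedPieceDim f n : ℚ) =
        2 + (n : ℚ) ^ 2 / 84 + delta2 (n % 2) + delta3 (n % 3) + delta7 (n % 7)) ∧
    gradedPieceDim f 0 = 1 := by
  constructor
  · intro n hn
    rw [gpd_eq f hf0 hf n]
    exact Gfinal n hn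
  · rw [gpd_eq f hf0 hf 0, Gc0]
end

section
/- For every nonzero primitive vector v ∈ ℤ¹² with vᵀ·G₁₂·v = 0 there exists a vector u ∈ ℤ¹² with uᵀ·G₁₂·u = 0 and vᵀ·G₁₂·u = 1. In other words, every primitive isotropic vector of the even unimodular lattice II_{2,10} ≅ U² ⊕ E₈ is contained in a sublattice isometric to the hyperbolic plane U. -/
open Matrix

/-- The hyperbolic plane `U`. -/
def Umat : Matrix (Fin 2) (Fin 2) ℤ := !![0, 1; 1, 0]

/-- The negative definite `E₈` Gram matrix: the negative of the Cartan matrix of `E₈`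
(chain `0–1–2–3–4–5–6` with node `7` attached to node `2`). -/
def E8neg : Matrix (Fin 8) (Fin 8) ℤ :=
  !![-2,  1,  0,  0,  0,  0,  0,  0;
      1, -2,  1,  0,  0,  0,  0,  0;
      0,  1, -2,  1,  0,  0,  0,  1;
      0,  0,  1, -2,  1,  0,  0,  0;
      0,  0,  0,  1, -2,  1,  0,  0;
      0,  0,  0,  0,  1, -2,  1,  0;
      0,  0,  0,  0,  0,  1, -2,  0;
      0,  0,  1,  0,  0,  0,  0, -2]

/-- The Gram matrix of `U ⊕ E₈`. -/
def UE8 : Matrix (Fin 10) (Fin 10) ℤ :=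
  Matrix.reindex finSumFinEquiv finSumFinEquiv (Matrix.fromBlocks Umat 0 0 E8neg)

/-- The Gram matrix of the even unimodular lattice `II_{2,10} ≅ U² ⊕ E₈`. -/
def G12 : Matrix (Fin 12) (Fin 12) ℤ :=
  Matrix.reindex finSumFinEquiv finSumFinEquiv (Matrix.fromBlocks Umat 0 0 UE8)

/-- A vector of `ℤ¹²` is primitive if the gcd of its coordinates is `1`. -/
def IsPrimitiveVec (v : Fin 12 → ℤ) : Prop := Finset.univ.gcd v = 1

/-- Integer inverse of `G12`. -/
def G12inv : Matrix (Fin 12) (Fin 12) ℤ :=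
  !![0, 1, 0, 0, 0, 0, 0, 0, 0, 0, 0, 0;
     1, 0, 0, 0, 0, 0, 0, 0, 0, 0, 0, 0;
     0, 0, 0, 1, 0, 0, 0, 0, 0, 0, 0, 0;
     0, 0, 1, 0, 0, 0, 0, 0, 0, 0, 0, 0;
     0, 0, 0, 0, -4, -7, -10, -8, -6, -4, -2, -5;
     0, 0, 0, 0, -7, -14, -20, -16, -12, -8, -4, -10;
     0, 0, 0, 0, -10, -20, -30, -24, -18, -12, -6, -15;
     0, 0, 0, 0, -8, -16, -24, -20, -15, -10, -5, -12;
     0, 0, 0, 0, -6, -12, -18, -15, -12, -8, -4, -9;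
     0, 0, 0, 0, -4, -8, -12, -10, -8, -6, -3, -6;
     0, 0, 0, 0, -2, -4, -6, -5, -4, -3, -2, -3;
     0, 0, 0, 0, -5, -10, -15, -12, -9, -6, -3, -8]

lemma G12_mul_inv : G12 * G12inv = 1 := by decide

lemma G12_symm : G12ᵀ = G12 := by decide

lemma G12_diag_mod : ∀ i : Fin 12, G12 i i % 2 = 0 := by decide

lemma G12_diag_even (i : Fin 12) : (2 : ℤ) ∣ G12 i i :=
  Int.dvd_of_emod_eq_zero (G12_diag_mod i)

/-- Bezout for finite families of integers. -/
lemma bezout_finset {ι : Type*} [DecidableEq ι] (s : Finset ι) (v : ι → ℤ) :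
    ∃ c : ι → ℤ, ∑ i ∈ s, c i * v i = s.gcd v := by
  classical
  induction s using Finset.induction with
  | empty => exact ⟨0, by simp⟩
  | @insert a s ha ih =>
    obtain ⟨c, hc⟩ := ih
    set g := s.gcd v with hg
    refine ⟨fun i => if i = a then Int.gcdA (v a) g else Int.gcdB (v a) g * c i, ?_⟩
    rw [Finset.sum_insert ha, Finset.gcd_insert]
    beta_reduce
    have h1 : ∑ i ∈ s, (if i = a then Int.gcdA (v a) g else Int.gcdB (v a) g * c i) * v i
        = Int.gcdB (v a) g * ∑ i ∈ s, c i * v i := by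
      rw [Finset.mul_sum]
      refine Finset.sum_congr rfl fun i hi => ?_
      rw [if_neg (by rintro rfl; exact ha hi)]
      ring
    rw [if_pos rfl, h1, hc, ← hg]
    have h2 := Int.gcd_eq_gcd_ab (v a) g
    have h3 : (gcd (v a) g : ℤ) = ↑(Int.gcd (v a) g) := (Int.coe_gcd _ _).symm
    rw [h3, h2]
    ring

/-- The quadratic form of `G12` is even. -/
lemma quad_even (x : Fin 12 → ℤ) : (2 : ℤ) ∣ x ⬝ᵥ G12.mulVec x := by
  classical
  have hexp : x ⬝ᵥ G12.mulVec x
      = ∑ p ∈ Finset.univ ×ˢ (Finset.univ : Finset (Fin 12)),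
          G12 p.1 p.2 * (x p.1 * x p.2) := by
    rw [Finset.sum_product]
    simp only [dotProduct, Matrix.mulVec, Finset.mul_sum]
    exact Finset.sum_congr rfl fun i _ => Finset.sum_congr rfl fun j _ => by ring
  have hz : ((x ⬝ᵥ G12.mulVec x : ℤ) : ZMod 2) = 0 := by
    rw [hexp]
    push_cast
    rw [← Finset.diag_union_offDiag, Finset.sum_union (Finset.disjoint_diag_offDiag _)]
    have hdiag : ∑ p ∈ (Finset.univ : Finset (Fin 12)).diag,
        ((G12 p.1 p.2 : ZMod 2) * ((x p.1 : ZMod 2) * (x p.2 : ZMod 2))) = 0 := by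
      refine Finset.sum_eq_zero fun p hp => ?_
      rw [Finset.mem_diag] at hp
      have : ((G12 p.1 p.2 : ℤ) : ZMod 2) = 0 := by
        rw [ZMod.intCast_zmod_eq_zero_iff_dvd]
        rw [hp.2]
        exact_mod_cast G12_diag_even p.2
      rw [this, zero_mul]
    have hoff : ∑ p ∈ (Finset.univ : Finset (Fin 12)).offDiag,
        ((G12 p.1 p.2 : ZMod 2) * ((x p.1 : ZMod 2) * (x p.2 : ZMod 2))) = 0 := by
      refine Finset.sum_involution (fun p _ => (p.2, p.1)) ?_ ?_ ?_ ?_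
      · intro p hp
        have hsy : G12 p.2 p.1 = G12 p.1 p.2 := by
          conv_lhs => rw [← G12_symm]
          rfl
        have : ((G12 p.2 p.1 : ℤ) : ZMod 2) * ((x p.2 : ZMod 2) * (x p.1 : ZMod 2))
            = ((G12 p.1 p.2 : ℤ) : ZMod 2) * ((x p.1 : ZMod 2) * (x p.2 : ZMod 2)) := by
          rw [hsy]; ring
        rw [this, ← two_mul]
        have h2 : (2 : ZMod 2) = 0 := rfl
        rw [h2, zero_mul]
      · intro p hp _
        rw [Finset.mem_offDiag] at hp
        intro h
        exact hp.2.2 (congrArg Prod.snd h)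
      · intro p hp
        rw [Finset.mem_offDiag] at hp ⊢
        exact ⟨hp.2.1, hp.1, fun h => hp.2.2 h.symm⟩
      · intro p hp; rfl
    rw [hdiag, hoff, add_zero]
  exact_mod_cast (ZMod.intCast_zmod_eq_zero_iff_dvd _ 2).mp hz

lemma G12_bilin_symm (a b : Fin 12 → ℤ) :
    a ⬝ᵥ G12.mulVec b = b ⬝ᵥ G12.mulVec a := by
  rw [Matrix.dotProduct_mulVec, ← Matrix.mulVec_transpose, G12_symm,
    dotProduct_comm]

/-- Every primitive isotropic vector of the even unimodular lattice `II_{2,10} ≅ U² ⊕ E₈`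
is contained in a sublattice isometric to the hyperbolic plane `U`. -/
theorem statement8 (v : Fin 12 → ℤ) (hv0 : v ≠ 0) (hvprim : IsPrimitiveVec v)
    (hv : v ⬝ᵥ G12.mulVec v = 0) :
    ∃ u : Fin 12 → ℤ, u ⬝ᵥ G12.mulVec u = 0 ∧ v ⬝ᵥ G12.mulVec u = 1 := by
  classical
  obtain ⟨c, hc⟩ := bezout_finset Finset.univ v
  rw [show Finset.univ.gcd v = 1 from hvprim] at hc
  set w := G12inv.mulVec c with hwdef
  have hGw : G12.mulVec w = c := by
    rw [hwdef, Matrix.mulVec_mulVec, G12_mul_inv, Matrix.one_mulVec]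
  have hvw : v ⬝ᵥ G12.mulVec w = 1 := by
    rw [hGw]
    rw [show v ⬝ᵥ c = ∑ i, c i * v i from Finset.sum_congr rfl fun i _ => mul_comm _ _]
    exact hc
  obtain ⟨m, hm⟩ := quad_even w
  refine ⟨w - m • v, ?_, ?_⟩
  · have h1 : G12.mulVec (w - m • v) = G12.mulVec w - m • G12.mulVec v := by
      rw [Matrix.mulVec_sub, Matrix.mulVec_smul]
    rw [h1, sub_dotProduct, dotProduct_sub, dotProduct_sub,
      smul_dotProduct, smul_dotProduct, dotProduct_smul,
      dotProduct_smul]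
    have hwv : w ⬝ᵥ G12.mulVec v = 1 := (G12_bilin_symm w v).trans hvw
    rw [hwv, hvw, hv, hm]
    simp only [smul_eq_mul]
    ring
  · have h1 : G12.mulVec (w - m • v) = G12.mulVec w - m • G12.mulVec v := by
      rw [Matrix.mulVec_sub, Matrix.mulVec_smul]
    rw [h1, dotProduct_sub, dotProduct_smul, hvw, hv]
    simp
end

section
/- Let f ∈ ℂ[w,x,y,z] be weighted homogeneous of degree 42 with respect to the weights (w,x,y,z) ↦ (1,6,14,21), and suppose that the coefficients in f of the monomials z², y³ and x⁷ are all nonzero. Then there exist λ, μ, ν, ρ ∈ ℂ×, c ∈ ℂ, a weighted-homogeneous polynomial q(w,x) of degree 14, a weighted-homogeneous polynomial p(w,x,y) of degree 21, a unit u ∈ ℂ×, and a tuple t = (t₄,t₁₀,t₁₂,t₁₆,t₁₈,t₂₂,t₂₄,t₂₈,t₃₀,t₃₆,t₄₂) ∈ ℂ¹¹ such that the ℂ-algebra endomorphism φ of ℂ[w,x,y,z] determined by φ(w) = λw, φ(x) = μx + cw⁶, φ(y) = νy + q(w,x), φ(z) = ρz + p(w,x,y) satisfies φ(f) = u · f_t,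 where f_t = z² + y³ + A_t·y + B_t is the Brieskorn normal form. -/
set_option linter.all false


open MvPolynomial

/-- For `t = (t₄,t₁₀,t₁₂,t₁₆,t₁₈,t₂₂,t₂₄,t₂₈,t₃₀,t₃₆,t₄₂) ∈ ℂ¹¹` (indexed here by `Fin 11`
in this order), the coefficient polynomial
`A_t = t₄x⁴w⁴ + t₁₀x³w¹⁰ + t₁₆x²w¹⁶ + t₂₂xw²² + t₂₈w²⁸`. -/
noncomputable def At (t : Fin 11 → ℂ) : MvPolynomial (Fin 4) ℂ :=
  C (t 0) * X 1 ^ 4 * X 0 ^ 4 + C (t 1) * X 1 ^ 3 * X 0 ^ 10 +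
  C (t 3) * X 1 ^ 2 * X 0 ^ 16 + C (t 5) * X 1 * X 0 ^ 22 + C (t 7) * X 0 ^ 28

/-- The coefficient polynomial
`B_t = x⁷ + t₁₂x⁵w¹² + t₁₈x⁴w¹⁸ + t₂₄x³w²⁴ + t₃₀x²w³⁰ + t₃₆xw³⁶ + t₄₂w⁴²`. -/
noncomputable def Bt (t : Fin 11 → ℂ) : MvPolynomial (Fin 4) ℂ :=
  X 1 ^ 7 + C (t 2) * X 1 ^ 5 * X 0 ^ 12 + C (t 4) * X 1 ^ 4 * X 0 ^ 18 +
  C (t 6) * X 1 ^ 3 * X 0 ^ 24 + C (t 8) * X 1 ^ 2 * X 0 ^ 30 +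
  C (t 9) * X 1 * X 0 ^ 36 + C (t 10) * X 0 ^ 42

/-- The Brieskorn normal form `f_t = z² + y³ + A_t·y + B_t`. -/
noncomputable def ft (t : Fin 11 → ℂ) : MvPolynomial (Fin 4) ℂ :=
  X 3 ^ 2 + X 2 ^ 3 + At t * X 2 + Bt t

set_option maxHeartbeats 4000000

open MvPolynomial

abbrev P4 := MvPolynomial (Fin 4) ℂ

noncomputable def mon (a b c d : ℕ) : Fin 4 →₀ ℕ :=
  Finsupp.single 0 a + Finsupp.single 1 b + Finsupp.single 2 c + Finsupp.single 3 d

@[simp] lemma mon_apply_zero (a b c d : ℕ) : mon a b c d 0 = a := by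
  simp [mon, Finsupp.single_apply]
@[simp] lemma mon_apply_one (a b c d : ℕ) : mon a b c d 1 = b := by
  simp [mon, Finsupp.single_apply]
@[simp] lemma mon_apply_two (a b c d : ℕ) : mon a b c d 2 = c := by
  simp [mon, Finsupp.single_apply]
@[simp] lemma mon_apply_three (a b c d : ℕ) : mon a b c d 3 = d := by
  simp [mon, Finsupp.single_apply]

lemma mon_self (m : Fin 4 →₀ ℕ) : m = mon (m 0) (m 1) (m 2) (m 3) := by
  ext i
  fin_cases i <;> simp

lemma weight_eq (d : Fin 4 →₀ ℕ) :
    (Finsupp.weight wts) d = d 0 + 6 * d 1 + 14 * d 2 + 21 * d 3 := by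
  rw [Finsupp.weight_apply, Finsupp.sum_fintype]
  · simp only [Fin.sum_univ_four, smul_eq_mul, wts]
    simp [Matrix.cons_val_zero, Matrix.cons_val_one, Matrix.head_cons]
    ring
  · simp

lemma weight_mon (a b c d : ℕ) :
    (Finsupp.weight wts) (mon a b c d) = a + 6 * b + 14 * c + 21 * d := by
  rw [weight_eq]; simp

lemma mon_eq_iff {a b c d a' b' c' d' : ℕ} :
    mon a b c d = mon a' b' c' d' ↔ a = a' ∧ b = b' ∧ c = c' ∧ d = d' := by
  constructor
  · intro h
    exact ⟨by simpa using congrArg (fun g => g 0) h, by simpa using congrArg (fun g => g 1) h,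
      by simpa using congrArg (fun g => g 2) h, by simpa using congrArg (fun g => g 3) h⟩
  · rintro ⟨rfl, rfl, rfl, rfl⟩; rfl

lemma mono_eq (α β γ δ : ℕ) (a : ℂ) :
    (C a * X 0 ^ α * X 1 ^ β * X 2 ^ γ * X 3 ^ δ : P4) = monomial (mon α β γ δ) a := by
  simp [mon, X_pow_eq_monomial, monomial_mul, C_mul_monomial, add_assoc]

lemma whg_pow {φ : P4} {m : ℕ} (h : IsWeightedHomogeneous wts φ m) (k : ℕ) :
    IsWeightedHomogeneous wts (φ ^ k) (m * k) := by
  induction k with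
  | zero => simpa using isWeightedHomogeneous_one ℂ wts
  | succ n ih =>
    rw [pow_succ, Nat.mul_succ]
    exact ih.mul h

lemma vars_CX (a : ℂ) (i : Fin 4) (bi : ℕ) :
    (C a * X i ^ bi : P4).vars ⊆ {i} := by
  refine (vars_mul _ _).trans (Finset.union_subset ?_ ?_)
  · simp [vars_C]
  · exact (vars_pow _ _).trans (by simp [vars_X])

lemma vars_CXX (a : ℂ) (i j : Fin 4) (bi bj : ℕ) :
    (C a * (X i ^ bi * X j ^ bj) : P4).vars ⊆ {i, j} := by
  refine (vars_mul _ _).trans (Finset.union_subset ?_ ((vars_mul _ _).trans (Finset.union_subset ?_ ?_)))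
  · simp [vars_C]
  · exact (vars_pow _ _).trans (by rw [vars_X]; exact Finset.singleton_subset_iff.mpr (by simp))
  · exact (vars_pow _ _).trans (by rw [vars_X]; exact Finset.singleton_subset_iff.mpr (by simp))

lemma vars_CXXX (a : ℂ) (i j k : Fin 4) (bi bj bk : ℕ) :
    (C a * (X i ^ bi * X j ^ bj * X k ^ bk) : P4).vars ⊆ {i, j, k} := by
  refine (vars_mul _ _).trans (Finset.union_subset ?_ ((vars_mul _ _).trans (Finset.union_subset ((vars_mul _ _).trans (Finset.union_subset ?_ ?_)) ?_)))
  · simp [vars_C]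
  · exact (vars_pow _ _).trans (by rw [vars_X]; exact Finset.singleton_subset_iff.mpr (by simp))
  · exact (vars_pow _ _).trans (by rw [vars_X]; exact Finset.singleton_subset_iff.mpr (by simp))
  · exact (vars_pow _ _).trans (by rw [vars_X]; exact Finset.singleton_subset_iff.mpr (by simp))

noncomputable def tv (t0 t1 t2 t3 t4 t5 t6 t7 t8 t9 t10 : ℂ) : Fin 11 → ℂ :=
  fun j => match j with
  | 0 => t0 | 1 => t1 | 2 => t2 | 3 => t3 | 4 => t4 | 5 => t5
  | 6 => t6 | 7 => t7 | 8 => t8 | 9 => t9 | 10 => t10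


lemma aeval_four (v1 v2 v3 v4 : Fin 4 → P4) (f : P4) :
    aeval v4 (aeval v3 (aeval v2 (aeval v1 f)))
    = aeval (fun i => aeval v4 (aeval v3 (aeval v2 (v1 i)))) f := by
  rw [show aeval v2 (aeval v1 f) = ((aeval v2).comp (aeval v1)) f from rfl, comp_aeval]
  rw [show aeval v3 (aeval (fun i => aeval v2 (v1 i)) f)
      = ((aeval v3).comp (aeval (fun i => aeval v2 (v1 i)))) f from rfl, comp_aeval]
  rw [show aeval v4 (aeval (fun i => aeval v3 (aeval v2 (v1 i))) f)
      = ((aeval v4).comp (aeval (fun i => aeval v3 (aeval v2 (v1 i))))) f from rfl, comp_aeval]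

lemma enum42 {m : Fin 4 →₀ ℕ} (h : m 0 + 6 * m 1 + 14 * m 2 + 21 * m 3 = 42) :
    m = mon 0 0 0 2 ∨ m = mon 1 1 1 1 ∨ m = mon 7 0 1 1 ∨ m = mon 3 3 0 1 ∨ m = mon 9 2 0 1 ∨ m = mon 15 1 0 1 ∨ m = mon 21 0 0 1 ∨ m = mon 0 0 3 0 ∨ m = mon 2 2 2 0 ∨ m = mon 8 1 2 0 ∨ m = mon 14 0 2 0 ∨ m = mon 4 4 1 0 ∨ m = mon 10 3 1 0 ∨ m = mon 16 2 1 0 ∨ m = mon 22 1 1 0 ∨ m = mon 28 0 1 0 ∨ m = mon 0 7 0 0 ∨ m = mon 6 6 0 0 ∨ m = mon 12 5 0 0 ∨ m = mon 18 4 0 0 ∨ m = mon 24 3 0 0 ∨ m = mon 30 2 0 0 ∨ m = mon 36 1 0 0 ∨ m = mon 42 0 0 0 := by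
  have hs := mon_self m
  have hdc : (m 3 = 2 ∧ m 2 = 0) ∨ (m 3 = 1 ∧ m 2 = 1) ∨ (m 3 = 1 ∧ m 2 = 0) ∨ (m 3 = 0 ∧ m 2 = 3) ∨ (m 3 = 0 ∧ m 2 = 2) ∨ (m 3 = 0 ∧ m 2 = 1) ∨ (m 3 = 0 ∧ m 2 = 0) := by omega
  rcases hdc with ⟨h3, h2⟩ | ⟨h3, h2⟩ | ⟨h3, h2⟩ | ⟨h3, h2⟩ | ⟨h3, h2⟩ | ⟨h3, h2⟩ | ⟨h3, h2⟩
  · -- d=2, c=0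
    have hab : (m 0 = 0 ∧ m 1 = 0) := by omega
    rcases hab with ⟨h0, h1⟩
    · exact Or.inl (by rw [hs, h0, h1, h2, h3])
  · -- d=1, c=1
    have hab : (m 0 = 1 ∧ m 1 = 1) ∨ (m 0 = 7 ∧ m 1 = 0) := by omega
    rcases hab with ⟨h0, h1⟩ | ⟨h0, h1⟩
    · exact Or.inr (Or.inl (by rw [hs, h0, h1, h2, h3]))
    · exact Or.inr (Or.inr (Or.inl (by rw [hs, h0, h1, h2, h3])))
  · -- d=1, c=0
    have hab : (m 0 = 3 ∧ m 1 = 3) ∨ (m 0 = 9 ∧ m 1 = 2) ∨ (m 0 = 15 ∧ m 1 = 1) ∨ (m 0 = 21 ∧ m 1 = 0) := by omega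
    rcases hab with ⟨h0, h1⟩ | ⟨h0, h1⟩ | ⟨h0, h1⟩ | ⟨h0, h1⟩
    · exact Or.inr (Or.inr (Or.inr (Or.inl (by rw [hs, h0, h1, h2, h3]))))
    · exact Or.inr (Or.inr (Or.inr (Or.inr (Or.inl (by rw [hs, h0, h1, h2, h3])))))
    · exact Or.inr (Or.inr (Or.inr (Or.inr (Or.inr (Or.inl (by rw [hs, h0, h1, h2, h3]))))))
    · exact Or.inr (Or.inr (Or.inr (Or.inr (Or.inr (Or.inr (Or.inl (by rw [hs, h0, h1, h2, h3])))))))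
  · -- d=0, c=3
    have hab : (m 0 = 0 ∧ m 1 = 0) := by omega
    rcases hab with ⟨h0, h1⟩
    · exact Or.inr (Or.inr (Or.inr (Or.inr (Or.inr (Or.inr (Or.inr (Or.inl (by rw [hs, h0, h1, h2, h3]))))))))
  · -- d=0, c=2
    have hab : (m 0 = 2 ∧ m 1 = 2) ∨ (m 0 = 8 ∧ m 1 = 1) ∨ (m 0 = 14 ∧ m 1 = 0) := by omega
    rcases hab with ⟨h0, h1⟩ | ⟨h0, h1⟩ | ⟨h0, h1⟩
    · exact Or.inr (Or.inr (Or.inr (Or.inr (Or.inr (Or.inr (Or.inr (Or.inr (Or.inl (by rw [hs, h0, h1, h2, h3])))))))))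
    · exact Or.inr (Or.inr (Or.inr (Or.inr (Or.inr (Or.inr (Or.inr (Or.inr (Or.inr (Or.inl (by rw [hs, h0, h1, h2, h3]))))))))))
    · exact Or.inr (Or.inr (Or.inr (Or.inr (Or.inr (Or.inr (Or.inr (Or.inr (Or.inr (Or.inr (Or.inl (by rw [hs, h0, h1, h2, h3])))))))))))
  · -- d=0, c=1
    have hab : (m 0 = 4 ∧ m 1 = 4) ∨ (m 0 = 10 ∧ m 1 = 3) ∨ (m 0 = 16 ∧ m 1 = 2) ∨ (m 0 = 22 ∧ m 1 = 1) ∨ (m 0 = 28 ∧ m 1 = 0) := by omega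
    rcases hab with ⟨h0, h1⟩ | ⟨h0, h1⟩ | ⟨h0, h1⟩ | ⟨h0, h1⟩ | ⟨h0, h1⟩
    · exact Or.inr (Or.inr (Or.inr (Or.inr (Or.inr (Or.inr (Or.inr (Or.inr (Or.inr (Or.inr (Or.inr (Or.inl (by rw [hs, h0, h1, h2, h3]))))))))))))
    · exact Or.inr (Or.inr (Or.inr (Or.inr (Or.inr (Or.inr (Or.inr (Or.inr (Or.inr (Or.inr (Or.inr (Or.inr (Or.inl (by rw [hs, h0, h1, h2, h3])))))))))))))
    · exact Or.inr (Or.inr (Or.inr (Or.inr (Or.inr (Or.inr (Or.inr (Or.inr (Or.inr (Or.inr (Or.inr (Or.inr (Or.inr (Or.inl (by rw [hs, h0, h1, h2, h3]))))))))))))))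
    · exact Or.inr (Or.inr (Or.inr (Or.inr (Or.inr (Or.inr (Or.inr (Or.inr (Or.inr (Or.inr (Or.inr (Or.inr (Or.inr (Or.inr (Or.inl (by rw [hs, h0, h1, h2, h3])))))))))))))))
    · exact Or.inr (Or.inr (Or.inr (Or.inr (Or.inr (Or.inr (Or.inr (Or.inr (Or.inr (Or.inr (Or.inr (Or.inr (Or.inr (Or.inr (Or.inr (Or.inl (by rw [hs, h0, h1, h2, h3]))))))))))))))))
  · -- d=0, c=0
    have hab : (m 0 = 0 ∧ m 1 = 7) ∨ (m 0 = 6 ∧ m 1 = 6) ∨ (m 0 = 12 ∧ m 1 = 5) ∨ (m 0 = 18 ∧ m 1 = 4) ∨ (m 0 = 24 ∧ m 1 = 3) ∨ (m 0 = 30 ∧ m 1 = 2) ∨ (m 0 = 36 ∧ m 1 = 1) ∨ (m 0 = 42 ∧ m 1 = 0) := by omega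
    rcases hab with ⟨h0, h1⟩ | ⟨h0, h1⟩ | ⟨h0, h1⟩ | ⟨h0, h1⟩ | ⟨h0, h1⟩ | ⟨h0, h1⟩ | ⟨h0, h1⟩ | ⟨h0, h1⟩
    · exact Or.inr (Or.inr (Or.inr (Or.inr (Or.inr (Or.inr (Or.inr (Or.inr (Or.inr (Or.inr (Or.inr (Or.inr (Or.inr (Or.inr (Or.inr (Or.inr (Or.inl (by rw [hs, h0, h1, h2, h3])))))))))))))))))
    · exact Or.inr (Or.inr (Or.inr (Or.inr (Or.inr (Or.inr (Or.inr (Or.inr (Or.inr (Or.inr (Or.inr (Or.inr (Or.inr (Or.inr (Or.inr (Or.inr (Or.inr (Or.inl (by rw [hs, h0, h1, h2, h3]))))))))))))))))))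
    · exact Or.inr (Or.inr (Or.inr (Or.inr (Or.inr (Or.inr (Or.inr (Or.inr (Or.inr (Or.inr (Or.inr (Or.inr (Or.inr (Or.inr (Or.inr (Or.inr (Or.inr (Or.inr (Or.inl (by rw [hs, h0, h1, h2, h3])))))))))))))))))))
    · exact Or.inr (Or.inr (Or.inr (Or.inr (Or.inr (Or.inr (Or.inr (Or.inr (Or.inr (Or.inr (Or.inr (Or.inr (Or.inr (Or.inr (Or.inr (Or.inr (Or.inr (Or.inr (Or.inr (Or.inl (by rw [hs, h0, h1, h2, h3]))))))))))))))))))))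
    · exact Or.inr (Or.inr (Or.inr (Or.inr (Or.inr (Or.inr (Or.inr (Or.inr (Or.inr (Or.inr (Or.inr (Or.inr (Or.inr (Or.inr (Or.inr (Or.inr (Or.inr (Or.inr (Or.inr (Or.inr (Or.inl (by rw [hs, h0, h1, h2, h3])))))))))))))))))))))
    · exact Or.inr (Or.inr (Or.inr (Or.inr (Or.inr (Or.inr (Or.inr (Or.inr (Or.inr (Or.inr (Or.inr (Or.inr (Or.inr (Or.inr (Or.inr (Or.inr (Or.inr (Or.inr (Or.inr (Or.inr (Or.inr (Or.inl (by rw [hs, h0, h1, h2, h3]))))))))))))))))))))))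
    · exact Or.inr (Or.inr (Or.inr (Or.inr (Or.inr (Or.inr (Or.inr (Or.inr (Or.inr (Or.inr (Or.inr (Or.inr (Or.inr (Or.inr (Or.inr (Or.inr (Or.inr (Or.inr (Or.inr (Or.inr (Or.inr (Or.inr (Or.inl (by rw [hs, h0, h1, h2, h3])))))))))))))))))))))))
    · exact Or.inr (Or.inr (Or.inr (Or.inr (Or.inr (Or.inr (Or.inr (Or.inr (Or.inr (Or.inr (Or.inr (Or.inr (Or.inr (Or.inr (Or.inr (Or.inr (Or.inr (Or.inr (Or.inr (Or.inr (Or.inr (Or.inr (Or.inr (by rw [hs, h0, h1, h2, h3])))))))))))))))))))))))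

set_option maxHeartbeats 4000000 in
lemma rep42 (f : P4) (hf : IsWeightedHomogeneous wts f 42) :
    f = monomial (mon 0 0 0 2) (coeff (mon 0 0 0 2) f) + monomial (mon 1 1 1 1) (coeff (mon 1 1 1 1) f) + monomial (mon 7 0 1 1) (coeff (mon 7 0 1 1) f) + monomial (mon 3 3 0 1) (coeff (mon 3 3 0 1) f) + monomial (mon 9 2 0 1) (coeff (mon 9 2 0 1) f) + monomial (mon 15 1 0 1) (coeff (mon 15 1 0 1) f) + monomial (mon 21 0 0 1) (coeff (mon 21 0 0 1) f) + monomial (mon 0 0 3 0) (coeff (mon 0 0 3 0) f) + monomial (mon 2 2 2 0) (coeff (mon 2 2 2 0) f) + monomial (mon 8 1 2 0) (coeff (mon 8 1 2 0) f) + monomial (mon 14 0 2 0) (coeff (mon 14 0 2 0) f) + monomial (mon 4 4 1 0) (coeff (mon 4 4 1 0) f) + monomial (mon 10 3 1 0) (coeff (mon 10 3 1 0) f) + monomial (mon 16 2 1 0) (coeff (mon 16 2 1 0) f) + monomial (mon 22 1 1 0) (coeff (mon 22 1 1 0) f) + monomial (mon 28 0 1 0) (coeff (mon 28 0 1 0)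 f) + monomial (mon 0 7 0 0) (coeff (mon 0 7 0 0) f) + monomial (mon 6 6 0 0) (coeff (mon 6 6 0 0) f) + monomial (mon 12 5 0 0) (coeff (mon 12 5 0 0) f) + monomial (mon 18 4 0 0) (coeff (mon 18 4 0 0) f) + monomial (mon 24 3 0 0) (coeff (mon 24 3 0 0) f) + monomial (mon 30 2 0 0) (coeff (mon 30 2 0 0) f) + monomial (mon 36 1 0 0) (coeff (mon 36 1 0 0) f) + monomial (mon 42 0 0 0) (coeff (mon 42 0 0 0) f) := by
  ext m
  simp only [coeff_add, coeff_monomial]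
  by_cases h42 : m 0 + 6 * m 1 + 14 * m 2 + 21 * m 3 = 42
  · rcases enum42 h42 with H | H | H | H | H | H | H | H | H | H | H | H | H | H | H | H | H | H | H | H | H | H | H | H <;>
      · subst H; simp [mon_eq_iff]
  · have h0 : coeff m f = 0 := hf.coeff_eq_zero m (by rw [weight_eq]; exact h42)
    have hne : ∀ a b c d : ℕ, a + 6 * b + 14 * c + 21 * d = 42 → ¬(mon a b c d = m) :=
      fun a b c d hs he => h42 (by subst he; simpa using hs)
    simp only [if_neg (hne 0 0 0 2 (by norm_num)), if_neg (hne 1 1 1 1 (by norm_num)), if_neg (hne 7 0 1 1 (by norm_num)), if_neg (hne 3 3 0 1 (by norm_num)), if_neg (hne 9 2 0 1 (by norm_num)), if_neg (hne 15 1 0 1 (by norm_num)), if_neg (hne 21 0 0 1 (by norm_num)), if_neg (hne 0 0 3 0 (by norm_num)), if_neg (hne 2 2 2 0 (by norm_num)), if_neg (hne 8 1 2 0 (by norm_num)), if_neg (hne 14 0 2 0 (by norm_num)), if_neg (hne 4 4 1 0 (by norm_num)), if_neg (hne 10 3 1 0 (by norm_num)), if_neg (hne 16 2 1 0 (by norm_num)),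 if_neg (hne 22 1 1 0 (by norm_num)), if_neg (hne 28 0 1 0 (by norm_num)), if_neg (hne 0 7 0 0 (by norm_num)), if_neg (hne 6 6 0 0 (by norm_num)), if_neg (hne 12 5 0 0 (by norm_num)), if_neg (hne 18 4 0 0 (by norm_num)), if_neg (hne 24 3 0 0 (by norm_num)), if_neg (hne 30 2 0 0 (by norm_num)), if_neg (hne 36 1 0 0 (by norm_num)), if_neg (hne 42 0 0 0 (by norm_num))]
    simpa using h0

/-- Any weighted-homogeneous polynomial of degree `42` for the weights `(1,6,14,21)` whose
coefficients of `z²`, `y³` and `x⁷` are nonzero can be brought to the Brieskorn normal form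
by a weighted coordinate change. -/
theorem statement11 (f : MvPolynomial (Fin 4) ℂ)
    (hf : IsWeightedHomogeneous wts f 42)
    (hz : coeff (Finsupp.single 3 2) f ≠ 0)
    (hy : coeff (Finsupp.single 2 3) f ≠ 0)
    (hx : coeff (Finsupp.single 1 7) f ≠ 0) :
    ∃ (lam mu nu rho c u : ℂ) (q p : MvPolynomial (Fin 4) ℂ) (t : Fin 11 → ℂ),
      lam ≠ 0 ∧ mu ≠ 0 ∧ nu ≠ 0 ∧ rho ≠ 0 ∧ u ≠ 0 ∧
      IsWeightedHomogeneous wts q 14 ∧ q.vars ⊆ {0, 1} ∧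
      IsWeightedHomogeneous wts p 21 ∧ p.vars ⊆ {0, 1, 2} ∧
      aeval ![C lam * X 0, C mu * X 1 + C c * X 0 ^ 6, C nu * X 2 + q, C rho * X 3 + p] f
        = C u * ft t := by
  classical
  obtain ⟨az2, haz2⟩ : ∃ v, coeff (mon 0 0 0 2) f = v := ⟨_, rfl⟩
  obtain ⟨azyx, hazyx⟩ : ∃ v, coeff (mon 1 1 1 1) f = v := ⟨_, rfl⟩
  obtain ⟨azyw, hazyw⟩ : ∃ v, coeff (mon 7 0 1 1) f = v := ⟨_, rfl⟩
  obtain ⟨azx3, hazx3⟩ : ∃ v, coeff (mon 3 3 0 1) f = v := ⟨_, rfl⟩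
  obtain ⟨azx2, hazx2⟩ : ∃ v, coeff (mon 9 2 0 1) f = v := ⟨_, rfl⟩
  obtain ⟨azx1, hazx1⟩ : ∃ v, coeff (mon 15 1 0 1) f = v := ⟨_, rfl⟩
  obtain ⟨azx0, hazx0⟩ : ∃ v, coeff (mon 21 0 0 1) f = v := ⟨_, rfl⟩
  obtain ⟨ay3, hay3⟩ : ∃ v, coeff (mon 0 0 3 0) f = v := ⟨_, rfl⟩
  obtain ⟨ay2a, hay2a⟩ : ∃ v, coeff (mon 2 2 2 0) f = v := ⟨_, rfl⟩
  obtain ⟨ay2b, hay2b⟩ : ∃ v, coeff (mon 8 1 2 0) f = v := ⟨_, rfl⟩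
  obtain ⟨ay2c, hay2c⟩ : ∃ v, coeff (mon 14 0 2 0) f = v := ⟨_, rfl⟩
  obtain ⟨ay1a, hay1a⟩ : ∃ v, coeff (mon 4 4 1 0) f = v := ⟨_, rfl⟩
  obtain ⟨ay1b, hay1b⟩ : ∃ v, coeff (mon 10 3 1 0) f = v := ⟨_, rfl⟩
  obtain ⟨ay1c, hay1c⟩ : ∃ v, coeff (mon 16 2 1 0) f = v := ⟨_, rfl⟩
  obtain ⟨ay1d, hay1d⟩ : ∃ v, coeff (mon 22 1 1 0) f = v := ⟨_, rfl⟩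
  obtain ⟨ay1e, hay1e⟩ : ∃ v, coeff (mon 28 0 1 0) f = v := ⟨_, rfl⟩
  obtain ⟨ax7, hax7⟩ : ∃ v, coeff (mon 0 7 0 0) f = v := ⟨_, rfl⟩
  obtain ⟨ax6, hax6⟩ : ∃ v, coeff (mon 6 6 0 0) f = v := ⟨_, rfl⟩
  obtain ⟨ax5, hax5⟩ : ∃ v, coeff (mon 12 5 0 0) f = v := ⟨_, rfl⟩
  obtain ⟨ax4, hax4⟩ : ∃ v, coeff (mon 18 4 0 0) f = v := ⟨_, rfl⟩
  obtain ⟨ax3, hax3⟩ : ∃ v, coeff (mon 24 3 0 0) f = v := ⟨_, rfl⟩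
  obtain ⟨ax2, hax2⟩ : ∃ v, coeff (mon 30 2 0 0) f = v := ⟨_, rfl⟩
  obtain ⟨ax1, hax1⟩ : ∃ v, coeff (mon 36 1 0 0) f = v := ⟨_, rfl⟩
  obtain ⟨ax0, hax0⟩ : ∃ v, coeff (mon 42 0 0 0) f = v := ⟨_, rfl⟩
  have hrep := rep42 f hf
  rw [haz2, hazyx, hazyw, hazx3, hazx2, hazx1, hazx0, hay3, hay2a, hay2b, hay2c, hay1a, hay1b, hay1c, hay1d, hay1e, hax7, hax6, hax5, hax4, hax3, hax2, hax1, hax0] at hrep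
  have hz0 : az2 ≠ 0 := by
    rw [← haz2, show mon 0 0 0 2 = Finsupp.single 3 2 by simp [mon]]; exact hz
  have hy0 : ay3 ≠ 0 := by
    rw [← hay3, show mon 0 0 3 0 = Finsupp.single 2 3 by simp [mon]]; exact hy
  have hx0 : ax7 ≠ 0 := by
    rw [← hax7, show mon 0 7 0 0 = Finsupp.single 1 7 by simp [mon]]; exact hx
  obtain ⟨nu, hnu⟩ := IsAlgClosed.exists_pow_nat_eq (az2 / ay3) (n := 3) (by norm_num)
  have hnu0 : nu ≠ 0 := by
    intro h
    have h3 : az2 / ay3 = 0 := by rw [← hnu, h]; simp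
    rcases div_eq_zero_iff.mp h3 with h4 | h4
    · exact hz0 h4
    · exact hy0 h4
  have hnuE : ay3 * nu ^ 3 = az2 := by rw [hnu]; field_simp
  obtain ⟨mu, hmu⟩ := IsAlgClosed.exists_pow_nat_eq (az2 / ax7) (n := 7) (by norm_num)
  have hmu0 : mu ≠ 0 := by
    intro h
    have h3 : az2 / ax7 = 0 := by rw [← hmu, h]; simp
    rcases div_eq_zero_iff.mp h3 with h4 | h4
    · exact hz0 h4
    · exact hx0 h4
  have hmuE : ax7 * mu ^ 7 = az2 := by rw [hmu]; field_simp
  obtain ⟨bzyx, h_bzyx⟩ : ∃ v : ℂ, v = azyx * mu * nu := ⟨_, rfl⟩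
  have h_bzyxC := congrArg (C : ℂ → P4) h_bzyx
  simp only [map_add, map_mul, map_pow, map_neg, map_sub, map_one, map_ofNat, map_intCast, map_natCast] at h_bzyxC
  obtain ⟨bzyw, h_bzyw⟩ : ∃ v : ℂ, v = azyw * nu := ⟨_, rfl⟩
  have h_bzywC := congrArg (C : ℂ → P4) h_bzyw
  simp only [map_add, map_mul, map_pow, map_neg, map_sub, map_one, map_ofNat, map_intCast, map_natCast] at h_bzywC
  obtain ⟨bzx3, h_bzx3⟩ : ∃ v : ℂ, v = azx3 * mu ^ 3 := ⟨_, rfl⟩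
  have h_bzx3C := congrArg (C : ℂ → P4) h_bzx3
  simp only [map_add, map_mul, map_pow, map_neg, map_sub, map_one, map_ofNat, map_intCast, map_natCast] at h_bzx3C
  obtain ⟨bzx2, h_bzx2⟩ : ∃ v : ℂ, v = azx2 * mu ^ 2 := ⟨_, rfl⟩
  have h_bzx2C := congrArg (C : ℂ → P4) h_bzx2
  simp only [map_add, map_mul, map_pow, map_neg, map_sub, map_one, map_ofNat, map_intCast, map_natCast] at h_bzx2C
  obtain ⟨bzx1, h_bzx1⟩ : ∃ v : ℂ, v = azx1 * mu := ⟨_, rfl⟩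
  have h_bzx1C := congrArg (C : ℂ → P4) h_bzx1
  simp only [map_add, map_mul, map_pow, map_neg, map_sub, map_one, map_ofNat, map_intCast, map_natCast] at h_bzx1C
  obtain ⟨by3, h_by3⟩ : ∃ v : ℂ, v = ay3 * nu ^ 3 := ⟨_, rfl⟩
  have h_by3C := congrArg (C : ℂ → P4) h_by3
  simp only [map_add, map_mul, map_pow, map_neg, map_sub, map_one, map_ofNat, map_intCast, map_natCast] at h_by3C
  obtain ⟨by2a, h_by2a⟩ : ∃ v : ℂ, v = ay2a * mu ^ 2 * nu ^ 2 := ⟨_, rfl⟩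
  have h_by2aC := congrArg (C : ℂ → P4) h_by2a
  simp only [map_add, map_mul, map_pow, map_neg, map_sub, map_one, map_ofNat, map_intCast, map_natCast] at h_by2aC
  obtain ⟨by2b, h_by2b⟩ : ∃ v : ℂ, v = ay2b * mu * nu ^ 2 := ⟨_, rfl⟩
  have h_by2bC := congrArg (C : ℂ → P4) h_by2b
  simp only [map_add, map_mul, map_pow, map_neg, map_sub, map_one, map_ofNat, map_intCast, map_natCast] at h_by2bC
  obtain ⟨by2c, h_by2c⟩ : ∃ v : ℂ, v = ay2c * nu ^ 2 := ⟨_, rfl⟩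
  have h_by2cC := congrArg (C : ℂ → P4) h_by2c
  simp only [map_add, map_mul, map_pow, map_neg, map_sub, map_one, map_ofNat, map_intCast, map_natCast] at h_by2cC
  obtain ⟨by1a, h_by1a⟩ : ∃ v : ℂ, v = ay1a * mu ^ 4 * nu := ⟨_, rfl⟩
  have h_by1aC := congrArg (C : ℂ → P4) h_by1a
  simp only [map_add, map_mul, map_pow, map_neg, map_sub, map_one, map_ofNat, map_intCast, map_natCast] at h_by1aC
  obtain ⟨by1b, h_by1b⟩ : ∃ v : ℂ, v = ay1b * mu ^ 3 * nu := ⟨_, rfl⟩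
  have h_by1bC := congrArg (C : ℂ → P4) h_by1b
  simp only [map_add, map_mul, map_pow, map_neg, map_sub, map_one, map_ofNat, map_intCast, map_natCast] at h_by1bC
  obtain ⟨by1c, h_by1c⟩ : ∃ v : ℂ, v = ay1c * mu ^ 2 * nu := ⟨_, rfl⟩
  have h_by1cC := congrArg (C : ℂ → P4) h_by1c
  simp only [map_add, map_mul, map_pow, map_neg, map_sub, map_one, map_ofNat, map_intCast, map_natCast] at h_by1cC
  obtain ⟨by1d, h_by1d⟩ : ∃ v : ℂ, v = ay1d * mu * nu := ⟨_, rfl⟩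
  have h_by1dC := congrArg (C : ℂ → P4) h_by1d
  simp only [map_add, map_mul, map_pow, map_neg, map_sub, map_one, map_ofNat, map_intCast, map_natCast] at h_by1dC
  obtain ⟨by1e, h_by1e⟩ : ∃ v : ℂ, v = ay1e * nu := ⟨_, rfl⟩
  have h_by1eC := congrArg (C : ℂ → P4) h_by1e
  simp only [map_add, map_mul, map_pow, map_neg, map_sub, map_one, map_ofNat, map_intCast, map_natCast] at h_by1eC
  obtain ⟨bx7, h_bx7⟩ : ∃ v : ℂ, v = ax7 * mu ^ 7 := ⟨_, rfl⟩
  have h_bx7C := congrArg (C : ℂ → P4) h_bx7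
  simp only [map_add, map_mul, map_pow, map_neg, map_sub, map_one, map_ofNat, map_intCast, map_natCast] at h_bx7C
  obtain ⟨bx6, h_bx6⟩ : ∃ v : ℂ, v = ax6 * mu ^ 6 := ⟨_, rfl⟩
  have h_bx6C := congrArg (C : ℂ → P4) h_bx6
  simp only [map_add, map_mul, map_pow, map_neg, map_sub, map_one, map_ofNat, map_intCast, map_natCast] at h_bx6C
  obtain ⟨bx5, h_bx5⟩ : ∃ v : ℂ, v = ax5 * mu ^ 5 := ⟨_, rfl⟩
  have h_bx5C := congrArg (C : ℂ → P4) h_bx5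
  simp only [map_add, map_mul, map_pow, map_neg, map_sub, map_one, map_ofNat, map_intCast, map_natCast] at h_bx5C
  obtain ⟨bx4, h_bx4⟩ : ∃ v : ℂ, v = ax4 * mu ^ 4 := ⟨_, rfl⟩
  have h_bx4C := congrArg (C : ℂ → P4) h_bx4
  simp only [map_add, map_mul, map_pow, map_neg, map_sub, map_one, map_ofNat, map_intCast, map_natCast] at h_bx4C
  obtain ⟨bx3, h_bx3⟩ : ∃ v : ℂ, v = ax3 * mu ^ 3 := ⟨_, rfl⟩
  have h_bx3C := congrArg (C : ℂ → P4) h_bx3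
  simp only [map_add, map_mul, map_pow, map_neg, map_sub, map_one, map_ofNat, map_intCast, map_natCast] at h_bx3C
  obtain ⟨bx2, h_bx2⟩ : ∃ v : ℂ, v = ax2 * mu ^ 2 := ⟨_, rfl⟩
  have h_bx2C := congrArg (C : ℂ → P4) h_bx2
  simp only [map_add, map_mul, map_pow, map_neg, map_sub, map_one, map_ofNat, map_intCast, map_natCast] at h_bx2C
  obtain ⟨bx1, h_bx1⟩ : ∃ v : ℂ, v = ax1 * mu := ⟨_, rfl⟩
  have h_bx1C := congrArg (C : ℂ → P4) h_bx1
  simp only [map_add, map_mul, map_pow, map_neg, map_sub, map_one, map_ofNat, map_intCast, map_natCast] at h_bx1C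
  have hby30 : by3 ≠ 0 := by rw [h_by3]; exact mul_ne_zero hy0 (pow_ne_zero _ hnu0)
  have hbx70 : bx7 ≠ 0 := by rw [h_bx7]; exact mul_ne_zero hx0 (pow_ne_zero _ hmu0)
  have hby3z : by3 = az2 := h_by3.trans hnuE
  have hbx7z : bx7 = az2 := h_bx7.trans hmuE
  have hby3zC := congrArg (C : ℂ → P4) hby3z
  have hbx7zC := congrArg (C : ℂ → P4) hbx7z
  obtain ⟨p1, h_p1⟩ : ∃ v : ℂ, ((2 : ℂ) * az2) * v + (bzyx) = 0 :=
    ⟨-((bzyx)) / (((2 : ℂ) * az2)), by field_simp [hz0]; try ring⟩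
  have h_p1C := congrArg (C : ℂ → P4) h_p1
  simp only [map_add, map_mul, map_pow, map_neg, map_sub, map_div₀, map_one, map_zero, map_ofNat, map_intCast, map_natCast] at h_p1C
  obtain ⟨p2, h_p2⟩ : ∃ v : ℂ, ((2 : ℂ) * az2) * v + (bzyw) = 0 :=
    ⟨-((bzyw)) / (((2 : ℂ) * az2)), by field_simp [hz0]; try ring⟩
  have h_p2C := congrArg (C : ℂ → P4) h_p2
  simp only [map_add, map_mul, map_pow, map_neg, map_sub, map_div₀, map_one, map_zero, map_ofNat, map_intCast, map_natCast] at h_p2C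
  obtain ⟨p3, h_p3⟩ : ∃ v : ℂ, ((2 : ℂ) * az2) * v + (bzx3) = 0 :=
    ⟨-((bzx3)) / (((2 : ℂ) * az2)), by field_simp [hz0]; try ring⟩
  have h_p3C := congrArg (C : ℂ → P4) h_p3
  simp only [map_add, map_mul, map_pow, map_neg, map_sub, map_div₀, map_one, map_zero, map_ofNat, map_intCast, map_natCast] at h_p3C
  obtain ⟨p4, h_p4⟩ : ∃ v : ℂ, ((2 : ℂ) * az2) * v + (bzx2) = 0 :=
    ⟨-((bzx2)) / (((2 : ℂ) * az2)), by field_simp [hz0]; try ring⟩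
  have h_p4C := congrArg (C : ℂ → P4) h_p4
  simp only [map_add, map_mul, map_pow, map_neg, map_sub, map_div₀, map_one, map_zero, map_ofNat, map_intCast, map_natCast] at h_p4C
  obtain ⟨p5, h_p5⟩ : ∃ v : ℂ, ((2 : ℂ) * az2) * v + (bzx1) = 0 :=
    ⟨-((bzx1)) / (((2 : ℂ) * az2)), by field_simp [hz0]; try ring⟩
  have h_p5C := congrArg (C : ℂ → P4) h_p5
  simp only [map_add, map_mul, map_pow, map_neg, map_sub, map_div₀, map_one, map_zero, map_ofNat, map_intCast, map_natCast] at h_p5C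
  obtain ⟨p6, h_p6⟩ : ∃ v : ℂ, ((2 : ℂ) * az2) * v + (azx0) = 0 :=
    ⟨-((azx0)) / (((2 : ℂ) * az2)), by field_simp [hz0]; try ring⟩
  have h_p6C := congrArg (C : ℂ → P4) h_p6
  simp only [map_add, map_mul, map_pow, map_neg, map_sub, map_div₀, map_one, map_zero, map_ofNat, map_intCast, map_natCast] at h_p6C
  obtain ⟨cy2a, h_cy2a⟩ : ∃ v : ℂ, v = az2 * p1 ^ 2 + bzyx * p1 + by2a := ⟨_, rfl⟩
  have h_cy2aC := congrArg (C : ℂ → P4) h_cy2a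
  simp only [map_add, map_mul, map_pow, map_neg, map_sub, map_one, map_ofNat, map_intCast, map_natCast] at h_cy2aC
  obtain ⟨cy2b, h_cy2b⟩ : ∃ v : ℂ, v = (2 : ℂ) * az2 * p1 * p2 + bzyx * p2 + bzyw * p1 + by2b := ⟨_, rfl⟩
  have h_cy2bC := congrArg (C : ℂ → P4) h_cy2b
  simp only [map_add, map_mul, map_pow, map_neg, map_sub, map_one, map_ofNat, map_intCast, map_natCast] at h_cy2bC
  obtain ⟨cy2c, h_cy2c⟩ : ∃ v : ℂ, v = az2 * p2 ^ 2 + bzyw * p2 + by2c := ⟨_, rfl⟩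
  have h_cy2cC := congrArg (C : ℂ → P4) h_cy2c
  simp only [map_add, map_mul, map_pow, map_neg, map_sub, map_one, map_ofNat, map_intCast, map_natCast] at h_cy2cC
  obtain ⟨cy1a, h_cy1a⟩ : ∃ v : ℂ, v = (2 : ℂ) * az2 * p1 * p3 + bzyx * p3 + bzx3 * p1 + by1a := ⟨_, rfl⟩
  have h_cy1aC := congrArg (C : ℂ → P4) h_cy1a
  simp only [map_add, map_mul, map_pow, map_neg, map_sub, map_one, map_ofNat, map_intCast, map_natCast] at h_cy1aC
  obtain ⟨cy1b, h_cy1b⟩ : ∃ v : ℂ, v = (2 : ℂ) * az2 * p1 * p4 + (2 : ℂ) * az2 * p2 * p3 + bzyx * p4 + bzyw * p3 + bzx3 * p2 + bzx2 * p1 + by1b := ⟨_, rfl⟩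
  have h_cy1bC := congrArg (C : ℂ → P4) h_cy1b
  simp only [map_add, map_mul, map_pow, map_neg, map_sub, map_one, map_ofNat, map_intCast, map_natCast] at h_cy1bC
  obtain ⟨cy1c, h_cy1c⟩ : ∃ v : ℂ, v = (2 : ℂ) * az2 * p1 * p5 + (2 : ℂ) * az2 * p2 * p4 + bzyx * p5 + bzyw * p4 + bzx2 * p2 + bzx1 * p1 + by1c := ⟨_, rfl⟩
  have h_cy1cC := congrArg (C : ℂ → P4) h_cy1c
  simp only [map_add, map_mul, map_pow, map_neg, map_sub, map_one, map_ofNat, map_intCast, map_natCast] at h_cy1cC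
  obtain ⟨cy1d, h_cy1d⟩ : ∃ v : ℂ, v = (2 : ℂ) * az2 * p1 * p6 + (2 : ℂ) * az2 * p2 * p5 + azx0 * p1 + bzyx * p6 + bzyw * p5 + bzx1 * p2 + by1d := ⟨_, rfl⟩
  have h_cy1dC := congrArg (C : ℂ → P4) h_cy1d
  simp only [map_add, map_mul, map_pow, map_neg, map_sub, map_one, map_ofNat, map_intCast, map_natCast] at h_cy1dC
  obtain ⟨cy1e, h_cy1e⟩ : ∃ v : ℂ, v = (2 : ℂ) * az2 * p2 * p6 + azx0 * p2 + bzyw * p6 + by1e := ⟨_, rfl⟩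
  have h_cy1eC := congrArg (C : ℂ → P4) h_cy1e
  simp only [map_add, map_mul, map_pow, map_neg, map_sub, map_one, map_ofNat, map_intCast, map_natCast] at h_cy1eC
  obtain ⟨cx6, h_cx6⟩ : ∃ v : ℂ, v = az2 * p3 ^ 2 + bzx3 * p3 + bx6 := ⟨_, rfl⟩
  have h_cx6C := congrArg (C : ℂ → P4) h_cx6
  simp only [map_add, map_mul, map_pow, map_neg, map_sub, map_one, map_ofNat, map_intCast, map_natCast] at h_cx6C
  obtain ⟨cx5, h_cx5⟩ : ∃ v : ℂ, v = (2 : ℂ) * az2 * p3 * p4 + bzx3 * p4 + bzx2 * p3 + bx5 := ⟨_, rfl⟩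
  have h_cx5C := congrArg (C : ℂ → P4) h_cx5
  simp only [map_add, map_mul, map_pow, map_neg, map_sub, map_one, map_ofNat, map_intCast, map_natCast] at h_cx5C
  obtain ⟨cx4, h_cx4⟩ : ∃ v : ℂ, v = (2 : ℂ) * az2 * p3 * p5 + az2 * p4 ^ 2 + bzx3 * p5 + bzx2 * p4 + bzx1 * p3 + bx4 := ⟨_, rfl⟩
  have h_cx4C := congrArg (C : ℂ → P4) h_cx4
  simp only [map_add, map_mul, map_pow, map_neg, map_sub, map_one, map_ofNat, map_intCast, map_natCast] at h_cx4C
  obtain ⟨cx3, h_cx3⟩ : ∃ v : ℂ, v = (2 : ℂ) * az2 * p3 * p6 + (2 : ℂ) * az2 * p4 * p5 + azx0 * p3 + bzx3 * p6 + bzx2 * p5 + bzx1 * p4 + bx3 := ⟨_, rfl⟩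
  have h_cx3C := congrArg (C : ℂ → P4) h_cx3
  simp only [map_add, map_mul, map_pow, map_neg, map_sub, map_one, map_ofNat, map_intCast, map_natCast] at h_cx3C
  obtain ⟨cx2, h_cx2⟩ : ∃ v : ℂ, v = (2 : ℂ) * az2 * p4 * p6 + az2 * p5 ^ 2 + azx0 * p4 + bzx2 * p6 + bzx1 * p5 + bx2 := ⟨_, rfl⟩
  have h_cx2C := congrArg (C : ℂ → P4) h_cx2
  simp only [map_add, map_mul, map_pow, map_neg, map_sub, map_one, map_ofNat, map_intCast, map_natCast] at h_cx2C
  obtain ⟨cx1, h_cx1⟩ : ∃ v : ℂ, v = (2 : ℂ) * az2 * p5 * p6 + azx0 * p5 + bzx1 * p6 + bx1 := ⟨_, rfl⟩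
  have h_cx1C := congrArg (C : ℂ → P4) h_cx1
  simp only [map_add, map_mul, map_pow, map_neg, map_sub, map_one, map_ofNat, map_intCast, map_natCast] at h_cx1C
  obtain ⟨cx0, h_cx0⟩ : ∃ v : ℂ, v = az2 * p6 ^ 2 + azx0 * p6 + ax0 := ⟨_, rfl⟩
  have h_cx0C := congrArg (C : ℂ → P4) h_cx0
  simp only [map_add, map_mul, map_pow, map_neg, map_sub, map_one, map_ofNat, map_intCast, map_natCast] at h_cx0C
  obtain ⟨q1, h_q1⟩ : ∃ v : ℂ, ((3 : ℂ) * by3) * v + (cy2a) = 0 :=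
    ⟨-((cy2a)) / (((3 : ℂ) * by3)), by field_simp [hby30]; try ring⟩
  have h_q1C := congrArg (C : ℂ → P4) h_q1
  simp only [map_add, map_mul, map_pow, map_neg, map_sub, map_div₀, map_one, map_zero, map_ofNat, map_intCast, map_natCast] at h_q1C
  obtain ⟨q2, h_q2⟩ : ∃ v : ℂ, ((3 : ℂ) * by3) * v + (cy2b) = 0 :=
    ⟨-((cy2b)) / (((3 : ℂ) * by3)), by field_simp [hby30]; try ring⟩
  have h_q2C := congrArg (C : ℂ → P4) h_q2
  simp only [map_add, map_mul, map_pow, map_neg, map_sub, map_div₀, map_one, map_zero, map_ofNat, map_intCast, map_natCast] at h_q2C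
  obtain ⟨q3, h_q3⟩ : ∃ v : ℂ, ((3 : ℂ) * by3) * v + (cy2c) = 0 :=
    ⟨-((cy2c)) / (((3 : ℂ) * by3)), by field_simp [hby30]; try ring⟩
  have h_q3C := congrArg (C : ℂ → P4) h_q3
  simp only [map_add, map_mul, map_pow, map_neg, map_sub, map_div₀, map_one, map_zero, map_ofNat, map_intCast, map_natCast] at h_q3C
  obtain ⟨dy1a, h_dy1a⟩ : ∃ v : ℂ, v = (3 : ℂ) * by3 * q1 ^ 2 + (2 : ℂ) * cy2a * q1 + cy1a := ⟨_, rfl⟩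
  have h_dy1aC := congrArg (C : ℂ → P4) h_dy1a
  simp only [map_add, map_mul, map_pow, map_neg, map_sub, map_one, map_ofNat, map_intCast, map_natCast] at h_dy1aC
  obtain ⟨dy1b, h_dy1b⟩ : ∃ v : ℂ, v = (6 : ℂ) * by3 * q1 * q2 + (2 : ℂ) * cy2a * q2 + (2 : ℂ) * cy2b * q1 + cy1b := ⟨_, rfl⟩
  have h_dy1bC := congrArg (C : ℂ → P4) h_dy1b
  simp only [map_add, map_mul, map_pow, map_neg, map_sub, map_one, map_ofNat, map_intCast, map_natCast] at h_dy1bC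
  obtain ⟨dy1c, h_dy1c⟩ : ∃ v : ℂ, v = (6 : ℂ) * by3 * q1 * q3 + (3 : ℂ) * by3 * q2 ^ 2 + (2 : ℂ) * cy2a * q3 + (2 : ℂ) * cy2b * q2 + (2 : ℂ) * cy2c * q1 + cy1c := ⟨_, rfl⟩
  have h_dy1cC := congrArg (C : ℂ → P4) h_dy1c
  simp only [map_add, map_mul, map_pow, map_neg, map_sub, map_one, map_ofNat, map_intCast, map_natCast] at h_dy1cC
  obtain ⟨dy1d, h_dy1d⟩ : ∃ v : ℂ, v = (6 : ℂ) * by3 * q2 * q3 + (2 : ℂ) * cy2b * q3 + (2 : ℂ) * cy2c * q2 + cy1d := ⟨_, rfl⟩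
  have h_dy1dC := congrArg (C : ℂ → P4) h_dy1d
  simp only [map_add, map_mul, map_pow, map_neg, map_sub, map_one, map_ofNat, map_intCast, map_natCast] at h_dy1dC
  obtain ⟨dy1e, h_dy1e⟩ : ∃ v : ℂ, v = (3 : ℂ) * by3 * q3 ^ 2 + (2 : ℂ) * cy2c * q3 + cy1e := ⟨_, rfl⟩
  have h_dy1eC := congrArg (C : ℂ → P4) h_dy1e
  simp only [map_add, map_mul, map_pow, map_neg, map_sub, map_one, map_ofNat, map_intCast, map_natCast] at h_dy1eC
  obtain ⟨dx6, h_dx6⟩ : ∃ v : ℂ, v = by3 * q1 ^ 3 + cy2a * q1 ^ 2 + cy1a * q1 + cx6 := ⟨_, rfl⟩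
  have h_dx6C := congrArg (C : ℂ → P4) h_dx6
  simp only [map_add, map_mul, map_pow, map_neg, map_sub, map_one, map_ofNat, map_intCast, map_natCast] at h_dx6C
  obtain ⟨dx5, h_dx5⟩ : ∃ v : ℂ, v = (3 : ℂ) * by3 * q1 ^ 2 * q2 + (2 : ℂ) * cy2a * q1 * q2 + cy2b * q1 ^ 2 + cy1a * q2 + cy1b * q1 + cx5 := ⟨_, rfl⟩
  have h_dx5C := congrArg (C : ℂ → P4) h_dx5
  simp only [map_add, map_mul, map_pow, map_neg, map_sub, map_one, map_ofNat, map_intCast, map_natCast] at h_dx5C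
  obtain ⟨dx4, h_dx4⟩ : ∃ v : ℂ, v = (3 : ℂ) * by3 * q1 * q2 ^ 2 + (3 : ℂ) * by3 * q1 ^ 2 * q3 + (2 : ℂ) * cy2a * q1 * q3 + cy2a * q2 ^ 2 + (2 : ℂ) * cy2b * q1 * q2 + cy2c * q1 ^ 2 + cy1a * q3 + cy1b * q2 + cy1c * q1 + cx4 := ⟨_, rfl⟩
  have h_dx4C := congrArg (C : ℂ → P4) h_dx4
  simp only [map_add, map_mul, map_pow, map_neg, map_sub, map_one, map_ofNat, map_intCast, map_natCast] at h_dx4C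
  obtain ⟨dx3, h_dx3⟩ : ∃ v : ℂ, v = (6 : ℂ) * by3 * q1 * q2 * q3 + by3 * q2 ^ 3 + (2 : ℂ) * cy2a * q2 * q3 + (2 : ℂ) * cy2b * q1 * q3 + cy2b * q2 ^ 2 + (2 : ℂ) * cy2c * q1 * q2 + cy1b * q3 + cy1c * q2 + cy1d * q1 + cx3 := ⟨_, rfl⟩
  have h_dx3C := congrArg (C : ℂ → P4) h_dx3
  simp only [map_add, map_mul, map_pow, map_neg, map_sub, map_one, map_ofNat, map_intCast, map_natCast] at h_dx3C
  obtain ⟨dx2, h_dx2⟩ : ∃ v : ℂ, v = (3 : ℂ) * by3 * q1 * q3 ^ 2 + (3 : ℂ) * by3 * q2 ^ 2 * q3 + cy2a * q3 ^ 2 + (2 : ℂ) * cy2b * q2 * q3 + (2 : ℂ) * cy2c * q1 * q3 + cy2c * q2 ^ 2 + cy1c * q3 + cy1d * q2 + cy1e * q1 + cx2 := ⟨_, rfl⟩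
  have h_dx2C := congrArg (C : ℂ → P4) h_dx2
  simp only [map_add, map_mul, map_pow, map_neg, map_sub, map_one, map_ofNat, map_intCast, map_natCast] at h_dx2C
  obtain ⟨dx1, h_dx1⟩ : ∃ v : ℂ, v = (3 : ℂ) * by3 * q2 * q3 ^ 2 + cy2b * q3 ^ 2 + (2 : ℂ) * cy2c * q2 * q3 + cy1d * q3 + cy1e * q2 + cx1 := ⟨_, rfl⟩
  have h_dx1C := congrArg (C : ℂ → P4) h_dx1
  simp only [map_add, map_mul, map_pow, map_neg, map_sub, map_one, map_ofNat, map_intCast, map_natCast] at h_dx1C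
  obtain ⟨dx0, h_dx0⟩ : ∃ v : ℂ, v = by3 * q3 ^ 3 + cy2c * q3 ^ 2 + cy1e * q3 + cx0 := ⟨_, rfl⟩
  have h_dx0C := congrArg (C : ℂ → P4) h_dx0
  simp only [map_add, map_mul, map_pow, map_neg, map_sub, map_one, map_ofNat, map_intCast, map_natCast] at h_dx0C
  obtain ⟨c0, h_c0⟩ : ∃ v : ℂ, ((7 : ℂ) * bx7) * v + (dx6) = 0 :=
    ⟨-((dx6)) / (((7 : ℂ) * bx7)), by field_simp [hbx70]; try ring⟩
  have h_c0C := congrArg (C : ℂ → P4) h_c0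
  simp only [map_add, map_mul, map_pow, map_neg, map_sub, map_div₀, map_one, map_zero, map_ofNat, map_intCast, map_natCast] at h_c0C
  obtain ⟨t0, h_t0⟩ : ∃ v : ℂ, az2 * v = dy1a := ⟨(dy1a) / az2, by field_simp [hz0]; try ring⟩
  have h_t0C := congrArg (C : ℂ → P4) h_t0
  simp only [map_add, map_mul, map_pow, map_neg, map_sub, map_one, map_ofNat, map_intCast, map_natCast] at h_t0C
  obtain ⟨t1, h_t1⟩ : ∃ v : ℂ, az2 * v = (4 : ℂ) * dy1a * c0 + dy1b := ⟨((4 : ℂ) * dy1a * c0 + dy1b) / az2, by field_simp [hz0]; try ring⟩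
  have h_t1C := congrArg (C : ℂ → P4) h_t1
  simp only [map_add, map_mul, map_pow, map_neg, map_sub, map_one, map_ofNat, map_intCast, map_natCast] at h_t1C
  obtain ⟨t2, h_t2⟩ : ∃ v : ℂ, az2 * v = (21 : ℂ) * bx7 * c0 ^ 2 + (6 : ℂ) * dx6 * c0 + dx5 := ⟨((21 : ℂ) * bx7 * c0 ^ 2 + (6 : ℂ) * dx6 * c0 + dx5) / az2, by field_simp [hz0]; try ring⟩
  have h_t2C := congrArg (C : ℂ → P4) h_t2
  simp only [map_add, map_mul, map_pow, map_neg, map_sub, map_one, map_ofNat, map_intCast, map_natCast] at h_t2C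
  obtain ⟨t3, h_t3⟩ : ∃ v : ℂ, az2 * v = (6 : ℂ) * dy1a * c0 ^ 2 + (3 : ℂ) * dy1b * c0 + dy1c := ⟨((6 : ℂ) * dy1a * c0 ^ 2 + (3 : ℂ) * dy1b * c0 + dy1c) / az2, by field_simp [hz0]; try ring⟩
  have h_t3C := congrArg (C : ℂ → P4) h_t3
  simp only [map_add, map_mul, map_pow, map_neg, map_sub, map_one, map_ofNat, map_intCast, map_natCast] at h_t3C
  obtain ⟨t4, h_t4⟩ : ∃ v : ℂ, az2 * v = (35 : ℂ) * bx7 * c0 ^ 3 + (15 : ℂ) * dx6 * c0 ^ 2 + (5 : ℂ) * dx5 * c0 + dx4 := ⟨((35 : ℂ) * bx7 * c0 ^ 3 + (15 : ℂ) * dx6 * c0 ^ 2 + (5 : ℂ) * dx5 * c0 + dx4) / az2, by field_simp [hz0]; try ring⟩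
  have h_t4C := congrArg (C : ℂ → P4) h_t4
  simp only [map_add, map_mul, map_pow, map_neg, map_sub, map_one, map_ofNat, map_intCast, map_natCast] at h_t4C
  obtain ⟨t5, h_t5⟩ : ∃ v : ℂ, az2 * v = (4 : ℂ) * dy1a * c0 ^ 3 + (3 : ℂ) * dy1b * c0 ^ 2 + (2 : ℂ) * dy1c * c0 + dy1d := ⟨((4 : ℂ) * dy1a * c0 ^ 3 + (3 : ℂ) * dy1b * c0 ^ 2 + (2 : ℂ) * dy1c * c0 + dy1d) / az2, by field_simp [hz0]; try ring⟩
  have h_t5C := congrArg (C : ℂ → P4) h_t5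
  simp only [map_add, map_mul, map_pow, map_neg, map_sub, map_one, map_ofNat, map_intCast, map_natCast] at h_t5C
  obtain ⟨t6, h_t6⟩ : ∃ v : ℂ, az2 * v = (35 : ℂ) * bx7 * c0 ^ 4 + (20 : ℂ) * dx6 * c0 ^ 3 + (10 : ℂ) * dx5 * c0 ^ 2 + (4 : ℂ) * dx4 * c0 + dx3 := ⟨((35 : ℂ) * bx7 * c0 ^ 4 + (20 : ℂ) * dx6 * c0 ^ 3 + (10 : ℂ) * dx5 * c0 ^ 2 + (4 : ℂ) * dx4 * c0 + dx3) / az2, by field_simp [hz0]; try ring⟩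
  have h_t6C := congrArg (C : ℂ → P4) h_t6
  simp only [map_add, map_mul, map_pow, map_neg, map_sub, map_one, map_ofNat, map_intCast, map_natCast] at h_t6C
  obtain ⟨t7, h_t7⟩ : ∃ v : ℂ, az2 * v = dy1a * c0 ^ 4 + dy1b * c0 ^ 3 + dy1c * c0 ^ 2 + dy1d * c0 + dy1e := ⟨(dy1a * c0 ^ 4 + dy1b * c0 ^ 3 + dy1c * c0 ^ 2 + dy1d * c0 + dy1e) / az2, by field_simp [hz0]; try ring⟩
  have h_t7C := congrArg (C : ℂ → P4) h_t7
  simp only [map_add, map_mul, map_pow, map_neg, map_sub, map_one, map_ofNat, map_intCast, map_natCast] at h_t7C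
  obtain ⟨t8, h_t8⟩ : ∃ v : ℂ, az2 * v = (21 : ℂ) * bx7 * c0 ^ 5 + (15 : ℂ) * dx6 * c0 ^ 4 + (10 : ℂ) * dx5 * c0 ^ 3 + (6 : ℂ) * dx4 * c0 ^ 2 + (3 : ℂ) * dx3 * c0 + dx2 := ⟨((21 : ℂ) * bx7 * c0 ^ 5 + (15 : ℂ) * dx6 * c0 ^ 4 + (10 : ℂ) * dx5 * c0 ^ 3 + (6 : ℂ) * dx4 * c0 ^ 2 + (3 : ℂ) * dx3 * c0 + dx2) / az2, by field_simp [hz0]; try ring⟩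
  have h_t8C := congrArg (C : ℂ → P4) h_t8
  simp only [map_add, map_mul, map_pow, map_neg, map_sub, map_one, map_ofNat, map_intCast, map_natCast] at h_t8C
  obtain ⟨t9, h_t9⟩ : ∃ v : ℂ, az2 * v = (7 : ℂ) * bx7 * c0 ^ 6 + (6 : ℂ) * dx6 * c0 ^ 5 + (5 : ℂ) * dx5 * c0 ^ 4 + (4 : ℂ) * dx4 * c0 ^ 3 + (3 : ℂ) * dx3 * c0 ^ 2 + (2 : ℂ) * dx2 * c0 + dx1 := ⟨((7 : ℂ) * bx7 * c0 ^ 6 + (6 : ℂ) * dx6 * c0 ^ 5 + (5 : ℂ) * dx5 * c0 ^ 4 + (4 : ℂ) * dx4 * c0 ^ 3 + (3 : ℂ) * dx3 * c0 ^ 2 + (2 : ℂ) * dx2 * c0 + dx1) / az2, by field_simp [hz0]; try ring⟩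
  have h_t9C := congrArg (C : ℂ → P4) h_t9
  simp only [map_add, map_mul, map_pow, map_neg, map_sub, map_one, map_ofNat, map_intCast, map_natCast] at h_t9C
  obtain ⟨t10, h_t10⟩ : ∃ v : ℂ, az2 * v = bx7 * c0 ^ 7 + dx6 * c0 ^ 6 + dx5 * c0 ^ 5 + dx4 * c0 ^ 4 + dx3 * c0 ^ 3 + dx2 * c0 ^ 2 + dx1 * c0 + dx0 := ⟨(bx7 * c0 ^ 7 + dx6 * c0 ^ 6 + dx5 * c0 ^ 5 + dx4 * c0 ^ 4 + dx3 * c0 ^ 3 + dx2 * c0 ^ 2 + dx1 * c0 + dx0) / az2, by field_simp [hz0]; try ring⟩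
  have h_t10C := congrArg (C : ℂ → P4) h_t10
  simp only [map_add, map_mul, map_pow, map_neg, map_sub, map_one, map_ofNat, map_intCast, map_natCast] at h_t10C
  obtain ⟨qq1, h_qq1⟩ : ∃ v : ℂ, v = nu * q1 := ⟨_, rfl⟩
  have h_qq1C := congrArg (C : ℂ → P4) h_qq1
  simp only [map_add, map_mul, map_pow, map_neg, map_sub, map_one, map_ofNat, map_intCast, map_natCast] at h_qq1C
  obtain ⟨qq2, h_qq2⟩ : ∃ v : ℂ, v = (2 : ℂ) * nu * q1 * c0 + nu * q2 := ⟨_, rfl⟩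
  have h_qq2C := congrArg (C : ℂ → P4) h_qq2
  simp only [map_add, map_mul, map_pow, map_neg, map_sub, map_one, map_ofNat, map_intCast, map_natCast] at h_qq2C
  obtain ⟨qq3, h_qq3⟩ : ∃ v : ℂ, v = nu * q1 * c0 ^ 2 + nu * q2 * c0 + nu * q3 := ⟨_, rfl⟩
  have h_qq3C := congrArg (C : ℂ → P4) h_qq3
  simp only [map_add, map_mul, map_pow, map_neg, map_sub, map_one, map_ofNat, map_intCast, map_natCast] at h_qq3C
  obtain ⟨pp1, h_pp1⟩ : ∃ v : ℂ, v = p1 := ⟨_, rfl⟩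
  have h_pp1C := congrArg (C : ℂ → P4) h_pp1
  obtain ⟨pp2, h_pp2⟩ : ∃ v : ℂ, v = p1 * c0 + p2 := ⟨_, rfl⟩
  have h_pp2C := congrArg (C : ℂ → P4) h_pp2
  simp only [map_add, map_mul, map_pow, map_neg, map_sub, map_one, map_ofNat, map_intCast, map_natCast] at h_pp2C
  obtain ⟨pp3, h_pp3⟩ : ∃ v : ℂ, v = p1 * q1 + p3 := ⟨_, rfl⟩
  have h_pp3C := congrArg (C : ℂ → P4) h_pp3
  simp only [map_add, map_mul, map_pow, map_neg, map_sub, map_one, map_ofNat, map_intCast, map_natCast] at h_pp3C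
  obtain ⟨pp4, h_pp4⟩ : ∃ v : ℂ, v = (3 : ℂ) * p1 * q1 * c0 + p1 * q2 + p2 * q1 + (3 : ℂ) * p3 * c0 + p4 := ⟨_, rfl⟩
  have h_pp4C := congrArg (C : ℂ → P4) h_pp4
  simp only [map_add, map_mul, map_pow, map_neg, map_sub, map_one, map_ofNat, map_intCast, map_natCast] at h_pp4C
  obtain ⟨pp5, h_pp5⟩ : ∃ v : ℂ, v = (3 : ℂ) * p1 * q1 * c0 ^ 2 + (2 : ℂ) * p1 * q2 * c0 + p1 * q3 + (2 : ℂ) * p2 * q1 * c0 + p2 * q2 + (3 : ℂ) * p3 * c0 ^ 2 + (2 : ℂ) * p4 * c0 + p5 := ⟨_, rfl⟩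
  have h_pp5C := congrArg (C : ℂ → P4) h_pp5
  simp only [map_add, map_mul, map_pow, map_neg, map_sub, map_one, map_ofNat, map_intCast, map_natCast] at h_pp5C
  obtain ⟨pp6, h_pp6⟩ : ∃ v : ℂ, v = p1 * q1 * c0 ^ 3 + p1 * q2 * c0 ^ 2 + p1 * q3 * c0 + p2 * q1 * c0 ^ 2 + p2 * q2 * c0 + p2 * q3 + p3 * c0 ^ 3 + p4 * c0 ^ 2 + p5 * c0 + p6 := ⟨_, rfl⟩
  have h_pp6C := congrArg (C : ℂ → P4) h_pp6
  simp only [map_add, map_mul, map_pow, map_neg, map_sub, map_one, map_ofNat, map_intCast, map_natCast] at h_pp6C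
  obtain ⟨cB, h_cB⟩ : ∃ v : ℂ, v = mu * c0 := ⟨_, rfl⟩
  have h_cBC := congrArg (C : ℂ → P4) h_cB
  simp only [map_add, map_mul, map_pow, map_neg, map_sub, map_one, map_ofNat, map_intCast, map_natCast] at h_cBC
  set qp : P4 := C qq1 * X 0 ^ 2 * X 1 ^ 2 + C qq2 * X 0 ^ 8 * X 1 + C qq3 * X 0 ^ 14 with hqp
  set pp : P4 := C pp1 * X 0 * X 1 * X 2 + C pp2 * X 0 ^ 7 * X 2 + C pp3 * X 0 ^ 3 * X 1 ^ 3 + C pp4 * X 0 ^ 9 * X 1 ^ 2 + C pp5 * X 0 ^ 15 * X 1 + C pp6 * X 0 ^ 21 with hpp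
  have hS : aeval (![X 0, C mu * X 1, C nu * X 2, X 3] : Fin 4 → P4) f = C az2 * X 3 ^ 2 + C bzyx * X 0 * X 1 * X 2 * X 3 + C bzyw * X 0 ^ 7 * X 2 * X 3 + C bzx3 * X 0 ^ 3 * X 1 ^ 3 * X 3 + C bzx2 * X 0 ^ 9 * X 1 ^ 2 * X 3 + C bzx1 * X 0 ^ 15 * X 1 * X 3 + C azx0 * X 0 ^ 21 * X 3 + C by3 * X 2 ^ 3 + C by2a * X 0 ^ 2 * X 1 ^ 2 * X 2 ^ 2 + C by2b * X 0 ^ 8 * X 1 * X 2 ^ 2 + C by2c * X 0 ^ 14 * X 2 ^ 2 + C by1a * X 0 ^ 4 * X 1 ^ 4 * X 2 + C by1b * X 0 ^ 10 * X 1 ^ 3 * X 2 + C by1c * X 0 ^ 16 * X 1 ^ 2 * X 2 + C by1d * X 0 ^ 22 * X 1 * X 2 + C by1e * X 0 ^ 28 * X 2 + C bx7 * X 1 ^ 7 + C bx6 * X 0 ^ 6 * X 1 ^ 6 + C bx5 * X 0 ^ 12 * X 1 ^ 5 + C bx4 * X 0 ^ 18 * X 1 ^ 4 + C bx3 * X 0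 ^ 24 * X 1 ^ 3 + C bx2 * X 0 ^ 30 * X 1 ^ 2 + C bx1 * X 0 ^ 36 * X 1 + C ax0 * X 0 ^ 42 := by
    rw [hrep]
    simp only [← mono_eq]
    simp only [Fin.zero_eta, Fin.mk_one, Fin.isValue, show (⟨2, by norm_num⟩ : Fin 4) = 2 from rfl, show (⟨3, by norm_num⟩ : Fin 4) = 3 from rfl, one_mul, map_add, map_mul, map_pow, aeval_C, aeval_X, algebraMap_eq, C_1, Matrix.cons_val_zero, Matrix.cons_val_one, Matrix.head_cons, Matrix.cons_val_two, Matrix.cons_val_three, Matrix.tail_cons]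
    linear_combination (norm := ring1) -(X 0 * X 1 * X 2 * X 3) * h_bzyxC + -(X 0 ^ 7 * X 2 * X 3) * h_bzywC + -(X 0 ^ 3 * X 1 ^ 3 * X 3) * h_bzx3C + -(X 0 ^ 9 * X 1 ^ 2 * X 3) * h_bzx2C + -(X 0 ^ 15 * X 1 * X 3) * h_bzx1C + -(X 2 ^ 3) * h_by3C + -(X 0 ^ 2 * X 1 ^ 2 * X 2 ^ 2) * h_by2aC + -(X 0 ^ 8 * X 1 * X 2 ^ 2) * h_by2bC + -(X 0 ^ 14 * X 2 ^ 2) * h_by2cC + -(X 0 ^ 4 * X 1 ^ 4 * X 2) * h_by1aC + -(X 0 ^ 10 * X 1 ^ 3 * X 2) * h_by1bC + -(X 0 ^ 16 * X 1 ^ 2 * X 2) * h_by1cC + -(X 0 ^ 22 * X 1 * X 2) * h_by1dC + -(X 0 ^ 28 * X 2) * h_by1eC + -(X 1 ^ 7) * h_bx7C + -(X 0 ^ 6 * X 1 ^ 6) * h_bx6C + -(X 0 ^ 12 * X 1 ^ 5) * h_bx5C + -(X 0 ^ 18 * X 1 ^ 4) * h_bx4C + -(X 0 ^ 24 * X 1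 ^ 3) * h_bx3C + -(X 0 ^ 30 * X 1 ^ 2) * h_bx2C + -(X 0 ^ 36 * X 1) * h_bx1C
  have hZ : aeval (![X 0, X 1, X 2, X 3 + (C p1 * X 0 * X 1 * X 2 + C p2 * X 0 ^ 7 * X 2 + C p3 * X 0 ^ 3 * X 1 ^ 3 + C p4 * X 0 ^ 9 * X 1 ^ 2 + C p5 * X 0 ^ 15 * X 1 + C p6 * X 0 ^ 21)] : Fin 4 → P4) (C az2 * X 3 ^ 2 + C bzyx * X 0 * X 1 * X 2 * X 3 + C bzyw * X 0 ^ 7 * X 2 * X 3 + C bzx3 * X 0 ^ 3 * X 1 ^ 3 * X 3 + C bzx2 * X 0 ^ 9 * X 1 ^ 2 * X 3 + C bzx1 * X 0 ^ 15 * X 1 * X 3 + C azx0 * X 0 ^ 21 * X 3 + C by3 * X 2 ^ 3 + C by2a * X 0 ^ 2 * X 1 ^ 2 * X 2 ^ 2 + C by2b * X 0 ^ 8 * X 1 * X 2 ^ 2 + C by2c * X 0 ^ 14 * X 2 ^ 2 + C by1a * X 0 ^ 4 * X 1 ^ 4 * X 2 + C by1b * X 0 ^ 10 * X 1 ^ 3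 * X 2 + C by1c * X 0 ^ 16 * X 1 ^ 2 * X 2 + C by1d * X 0 ^ 22 * X 1 * X 2 + C by1e * X 0 ^ 28 * X 2 + C bx7 * X 1 ^ 7 + C bx6 * X 0 ^ 6 * X 1 ^ 6 + C bx5 * X 0 ^ 12 * X 1 ^ 5 + C bx4 * X 0 ^ 18 * X 1 ^ 4 + C bx3 * X 0 ^ 24 * X 1 ^ 3 + C bx2 * X 0 ^ 30 * X 1 ^ 2 + C bx1 * X 0 ^ 36 * X 1 + C ax0 * X 0 ^ 42) = C az2 * X 3 ^ 2 + C by3 * X 2 ^ 3 + C cy2a * X 0 ^ 2 * X 1 ^ 2 * X 2 ^ 2 + C cy2b * X 0 ^ 8 * X 1 * X 2 ^ 2 + C cy2c * X 0 ^ 14 * X 2 ^ 2 + C cy1a * X 0 ^ 4 * X 1 ^ 4 * X 2 + C cy1b * X 0 ^ 10 * X 1 ^ 3 * X 2 + C cy1c * X 0 ^ 16 * X 1 ^ 2 * X 2 + C cy1d * X 0 ^ 22 * X 1 * X 2 + C cy1e * X 0 ^ 28 * X 2 + C bx7 * X 1 ^ 7 + C cx6 * X 0 ^ 6 * X 1 ^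 6 + C cx5 * X 0 ^ 12 * X 1 ^ 5 + C cx4 * X 0 ^ 18 * X 1 ^ 4 + C cx3 * X 0 ^ 24 * X 1 ^ 3 + C cx2 * X 0 ^ 30 * X 1 ^ 2 + C cx1 * X 0 ^ 36 * X 1 + C cx0 * X 0 ^ 42 := by
    simp only [Fin.zero_eta, Fin.mk_one, Fin.isValue, show (⟨2, by norm_num⟩ : Fin 4) = 2 from rfl, show (⟨3, by norm_num⟩ : Fin 4) = 3 from rfl, one_mul, map_add, map_mul, map_pow, aeval_C, aeval_X, algebraMap_eq, C_1, Matrix.cons_val_zero, Matrix.cons_val_one, Matrix.head_cons, Matrix.cons_val_two, Matrix.cons_val_three, Matrix.tail_cons]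
    linear_combination (norm := ring1) (X 0 * X 1 * X 2 * X 3) * h_p1C + (X 0 ^ 7 * X 2 * X 3) * h_p2C + (X 0 ^ 3 * X 1 ^ 3 * X 3) * h_p3C + (X 0 ^ 9 * X 1 ^ 2 * X 3) * h_p4C + (X 0 ^ 15 * X 1 * X 3) * h_p5C + (X 0 ^ 21 * X 3) * h_p6C + -(X 0 ^ 2 * X 1 ^ 2 * X 2 ^ 2) * h_cy2aC + -(X 0 ^ 8 * X 1 * X 2 ^ 2) * h_cy2bC + -(X 0 ^ 14 * X 2 ^ 2) * h_cy2cC + -(X 0 ^ 4 * X 1 ^ 4 * X 2) * h_cy1aC + -(X 0 ^ 10 * X 1 ^ 3 * X 2) * h_cy1bC + -(X 0 ^ 16 * X 1 ^ 2 * X 2) * h_cy1cC + -(X 0 ^ 22 * X 1 * X 2) * h_cy1dC + -(X 0 ^ 28 * X 2) * h_cy1eC + -(X 0 ^ 6 * X 1 ^ 6) * h_cx6C + -(X 0 ^ 12 * X 1 ^ 5) * h_cx5C + -(X 0 ^ 18 * X 1 ^ 4) * h_cx4C + -(X 0 ^ 24 * X 1 ^ 3) * h_cx3C + -(X 0 ^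 30 * X 1 ^ 2) * h_cx2C + -(X 0 ^ 36 * X 1) * h_cx1C + -(X 0 ^ 42) * h_cx0C
  have hY : aeval (![X 0, X 1, X 2 + (C q1 * X 0 ^ 2 * X 1 ^ 2 + C q2 * X 0 ^ 8 * X 1 + C q3 * X 0 ^ 14), X 3] : Fin 4 → P4) (C az2 * X 3 ^ 2 + C by3 * X 2 ^ 3 + C cy2a * X 0 ^ 2 * X 1 ^ 2 * X 2 ^ 2 + C cy2b * X 0 ^ 8 * X 1 * X 2 ^ 2 + C cy2c * X 0 ^ 14 * X 2 ^ 2 + C cy1a * X 0 ^ 4 * X 1 ^ 4 * X 2 + C cy1b * X 0 ^ 10 * X 1 ^ 3 * X 2 + C cy1c * X 0 ^ 16 * X 1 ^ 2 * X 2 + C cy1d * X 0 ^ 22 * X 1 * X 2 + C cy1e * X 0 ^ 28 * X 2 + C bx7 * X 1 ^ 7 + C cx6 * X 0 ^ 6 * X 1 ^ 6 + C cx5 * X 0 ^ 12 * X 1 ^ 5 + C cx4 * X 0 ^ 18 * X 1 ^ 4 + C cx3 * X 0 ^ 24 * X 1 ^ 3 + C cx2 * X 0 ^ 30 * X 1 ^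 2 + C cx1 * X 0 ^ 36 * X 1 + C cx0 * X 0 ^ 42) = C az2 * X 3 ^ 2 + C by3 * X 2 ^ 3 + C dy1a * X 0 ^ 4 * X 1 ^ 4 * X 2 + C dy1b * X 0 ^ 10 * X 1 ^ 3 * X 2 + C dy1c * X 0 ^ 16 * X 1 ^ 2 * X 2 + C dy1d * X 0 ^ 22 * X 1 * X 2 + C dy1e * X 0 ^ 28 * X 2 + C bx7 * X 1 ^ 7 + C dx6 * X 0 ^ 6 * X 1 ^ 6 + C dx5 * X 0 ^ 12 * X 1 ^ 5 + C dx4 * X 0 ^ 18 * X 1 ^ 4 + C dx3 * X 0 ^ 24 * X 1 ^ 3 + C dx2 * X 0 ^ 30 * X 1 ^ 2 + C dx1 * X 0 ^ 36 * X 1 + C dx0 * X 0 ^ 42 := by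
    simp only [Fin.zero_eta, Fin.mk_one, Fin.isValue, show (⟨2, by norm_num⟩ : Fin 4) = 2 from rfl, show (⟨3, by norm_num⟩ : Fin 4) = 3 from rfl, one_mul, map_add, map_mul, map_pow, aeval_C, aeval_X, algebraMap_eq, C_1, Matrix.cons_val_zero, Matrix.cons_val_one, Matrix.head_cons, Matrix.cons_val_two, Matrix.cons_val_three, Matrix.tail_cons]
    linear_combination (norm := ring1) (X 0 ^ 2 * X 1 ^ 2 * X 2 ^ 2) * h_q1C + (X 0 ^ 8 * X 1 * X 2 ^ 2) * h_q2C + (X 0 ^ 14 * X 2 ^ 2) * h_q3C + -(X 0 ^ 4 * X 1 ^ 4 * X 2) * h_dy1aC + -(X 0 ^ 10 * X 1 ^ 3 * X 2) * h_dy1bC + -(X 0 ^ 16 * X 1 ^ 2 * X 2) * h_dy1cC + -(X 0 ^ 22 * X 1 * X 2) * h_dy1dC + -(X 0 ^ 28 * X 2) * h_dy1eC + -(X 0 ^ 6 * X 1 ^ 6) * h_dx6C + -(X 0 ^ 12 * X 1 ^ 5) * h_dx5C + -(X 0 ^ 18 * X 1 ^ 4) * h_dx4C + -(X 0 ^ 24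 * X 1 ^ 3) * h_dx3C + -(X 0 ^ 30 * X 1 ^ 2) * h_dx2C + -(X 0 ^ 36 * X 1) * h_dx1C + -(X 0 ^ 42) * h_dx0C
  have hX : aeval (![X 0, X 1 + C c0 * X 0 ^ 6, X 2, X 3] : Fin 4 → P4) (C az2 * X 3 ^ 2 + C by3 * X 2 ^ 3 + C dy1a * X 0 ^ 4 * X 1 ^ 4 * X 2 + C dy1b * X 0 ^ 10 * X 1 ^ 3 * X 2 + C dy1c * X 0 ^ 16 * X 1 ^ 2 * X 2 + C dy1d * X 0 ^ 22 * X 1 * X 2 + C dy1e * X 0 ^ 28 * X 2 + C bx7 * X 1 ^ 7 + C dx6 * X 0 ^ 6 * X 1 ^ 6 + C dx5 * X 0 ^ 12 * X 1 ^ 5 + C dx4 * X 0 ^ 18 * X 1 ^ 4 + C dx3 * X 0 ^ 24 * X 1 ^ 3 + C dx2 * X 0 ^ 30 * X 1 ^ 2 + C dx1 * X 0 ^ 36 * X 1 + C dx0 * X 0 ^ 42) = C az2 * ft (tv t0 t1 t2 t3 t4 t5 t6 t7 t8 t9 t10) := by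
    simp only [ft, At, Bt]
    rw [show (tv t0 t1 t2 t3 t4 t5 t6 t7 t8 t9 t10) 0 = t0 from rfl]
    rw [show (tv t0 t1 t2 t3 t4 t5 t6 t7 t8 t9 t10) 1 = t1 from rfl]
    rw [show (tv t0 t1 t2 t3 t4 t5 t6 t7 t8 t9 t10) 2 = t2 from rfl]
    rw [show (tv t0 t1 t2 t3 t4 t5 t6 t7 t8 t9 t10) 3 = t3 from rfl]
    rw [show (tv t0 t1 t2 t3 t4 t5 t6 t7 t8 t9 t10) 4 = t4 from rfl]
    rw [show (tv t0 t1 t2 t3 t4 t5 t6 t7 t8 t9 t10) 5 = t5 from rfl]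
    rw [show (tv t0 t1 t2 t3 t4 t5 t6 t7 t8 t9 t10) 6 = t6 from rfl]
    rw [show (tv t0 t1 t2 t3 t4 t5 t6 t7 t8 t9 t10) 7 = t7 from rfl]
    rw [show (tv t0 t1 t2 t3 t4 t5 t6 t7 t8 t9 t10) 8 = t8 from rfl]
    rw [show (tv t0 t1 t2 t3 t4 t5 t6 t7 t8 t9 t10) 9 = t9 from rfl]
    rw [show (tv t0 t1 t2 t3 t4 t5 t6 t7 t8 t9 t10) 10 = t10 from rfl]
    simp only [Fin.zero_eta, Fin.mk_one, Fin.isValue, show (⟨2, by norm_num⟩ : Fin 4) = 2 from rfl, show (⟨3, by norm_num⟩ : Fin 4) = 3 from rfl, one_mul, map_add, map_mul, map_pow, aeval_C, aeval_X, algebraMap_eq, C_1, Matrix.cons_val_zero, Matrix.cons_val_one, Matrix.head_cons, Matrix.cons_val_two, Matrix.cons_val_three, Matrix.tail_cons]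
    linear_combination (norm := ring1) (X 0 ^ 6 * X 1 ^ 6) * h_c0C + -(X 0 ^ 4 * X 1 ^ 4 * X 2) * h_t0C + -(X 0 ^ 10 * X 1 ^ 3 * X 2) * h_t1C + -(X 0 ^ 12 * X 1 ^ 5) * h_t2C + -(X 0 ^ 16 * X 1 ^ 2 * X 2) * h_t3C + -(X 0 ^ 18 * X 1 ^ 4) * h_t4C + -(X 0 ^ 22 * X 1 * X 2) * h_t5C + -(X 0 ^ 24 * X 1 ^ 3) * h_t6C + -(X 0 ^ 28 * X 2) * h_t7C + -(X 0 ^ 30 * X 1 ^ 2) * h_t8C + -(X 0 ^ 36 * X 1) * h_t9C + -(X 0 ^ 42) * h_t10C + (X 2 ^ 3) * hby3zC + (X 1 ^ 7) * hbx7zC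
  have hqw : IsWeightedHomogeneous wts qp 14 := by
    rw [hqp]
    have h1 : IsWeightedHomogeneous wts (C qq1 * X 0 ^ 2 * X 1 ^ 2 : P4) (((0 + wts 0 * 2) + wts 1 * 2)) := (((isWeightedHomogeneous_C wts qq1).mul (whg_pow (isWeightedHomogeneous_X ℂ wts 0) 2)).mul (whg_pow (isWeightedHomogeneous_X ℂ wts 1) 2))
    have h2 : IsWeightedHomogeneous wts (C qq2 * X 0 ^ 8 * X 1 : P4) (((0 + wts 0 * 8) + wts 1)) := (((isWeightedHomogeneous_C wts qq2).mul (whg_pow (isWeightedHomogeneous_X ℂ wts 0) 8)).mul (isWeightedHomogeneous_X ℂ wts 1))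
    have h3 : IsWeightedHomogeneous wts (C qq3 * X 0 ^ 14 : P4) ((0 + wts 0 * 14)) := ((isWeightedHomogeneous_C wts qq3).mul (whg_pow (isWeightedHomogeneous_X ℂ wts 0) 14))
    norm_num [wts, Matrix.cons_val_zero, Matrix.cons_val_one, Matrix.head_cons, Matrix.cons_val_two, Matrix.cons_val_three, Matrix.tail_cons] at h1 h2 h3
    exact ((h1.add h2).add h3)
  have hpw : IsWeightedHomogeneous wts pp 21 := by
    rw [hpp]
    have h1 : IsWeightedHomogeneous wts (C pp1 * X 0 * X 1 * X 2 : P4) ((((0 + wts 0) + wts 1) + wts 2)) := ((((isWeightedHomogeneous_C wts pp1).mul (isWeightedHomogeneous_X ℂ wts 0)).mul (isWeightedHomogeneous_X ℂ wts 1)).mul (isWeightedHomogeneous_X ℂ wts 2))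
    have h2 : IsWeightedHomogeneous wts (C pp2 * X 0 ^ 7 * X 2 : P4) (((0 + wts 0 * 7) + wts 2)) := (((isWeightedHomogeneous_C wts pp2).mul (whg_pow (isWeightedHomogeneous_X ℂ wts 0) 7)).mul (isWeightedHomogeneous_X ℂ wts 2))
    have h3 : IsWeightedHomogeneous wts (C pp3 * X 0 ^ 3 * X 1 ^ 3 : P4) (((0 + wts 0 * 3) + wts 1 * 3)) := (((isWeightedHomogeneous_C wts pp3).mul (whg_pow (isWeightedHomogeneous_X ℂ wts 0) 3)).mul (whg_pow (isWeightedHomogeneous_X ℂ wts 1) 3))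
    have h4 : IsWeightedHomogeneous wts (C pp4 * X 0 ^ 9 * X 1 ^ 2 : P4) (((0 + wts 0 * 9) + wts 1 * 2)) := (((isWeightedHomogeneous_C wts pp4).mul (whg_pow (isWeightedHomogeneous_X ℂ wts 0) 9)).mul (whg_pow (isWeightedHomogeneous_X ℂ wts 1) 2))
    have h5 : IsWeightedHomogeneous wts (C pp5 * X 0 ^ 15 * X 1 : P4) (((0 + wts 0 * 15) + wts 1)) := (((isWeightedHomogeneous_C wts pp5).mul (whg_pow (isWeightedHomogeneous_X ℂ wts 0) 15)).mul (isWeightedHomogeneous_X ℂ wts 1))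
    have h6 : IsWeightedHomogeneous wts (C pp6 * X 0 ^ 21 : P4) ((0 + wts 0 * 21)) := ((isWeightedHomogeneous_C wts pp6).mul (whg_pow (isWeightedHomogeneous_X ℂ wts 0) 21))
    norm_num [wts, Matrix.cons_val_zero, Matrix.cons_val_one, Matrix.head_cons, Matrix.cons_val_two, Matrix.cons_val_three, Matrix.tail_cons] at h1 h2 h3 h4 h5 h6
    exact (((((h1.add h2).add h3).add h4).add h5).add h6)
  have hqv : qp.vars ⊆ ({0, 1} : Finset (Fin 4)) := by
    rw [hqp]
    refine ((vars_add_subset _ _).trans (Finset.union_subset ((vars_add_subset _ _).trans (Finset.union_subset ?_ ?_)) ?_))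
    · exact ((vars_mul _ _).trans (Finset.union_subset ((vars_mul _ _).trans (Finset.union_subset (by simp [vars_C]) ((vars_pow _ _).trans (by rw [vars_X]; decide)))) ((vars_pow _ _).trans (by rw [vars_X]; decide))))
    · exact ((vars_mul _ _).trans (Finset.union_subset ((vars_mul _ _).trans (Finset.union_subset (by simp [vars_C]) ((vars_pow _ _).trans (by rw [vars_X]; decide)))) (by rw [vars_X]; decide)))
    · exact ((vars_mul _ _).trans (Finset.union_subset (by simp [vars_C]) ((vars_pow _ _).trans (by rw [vars_X]; decide))))
  have hpv : pp.vars ⊆ ({0, 1, 2} : Finset (Fin 4)) := by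
    rw [hpp]
    refine ((vars_add_subset _ _).trans (Finset.union_subset ((vars_add_subset _ _).trans (Finset.union_subset ((vars_add_subset _ _).trans (Finset.union_subset ((vars_add_subset _ _).trans (Finset.union_subset ((vars_add_subset _ _).trans (Finset.union_subset ?_ ?_)) ?_)) ?_)) ?_)) ?_))
    · exact ((vars_mul _ _).trans (Finset.union_subset ((vars_mul _ _).trans (Finset.union_subset ((vars_mul _ _).trans (Finset.union_subset (by simp [vars_C]) (by rw [vars_X]; decide))) (by rw [vars_X]; decide))) (by rw [vars_X]; decide)))
    · exact ((vars_mul _ _).trans (Finset.union_subset ((vars_mul _ _).trans (Finset.union_subset (by simp [vars_C]) ((vars_pow _ _).trans (by rw [vars_X]; decide)))) (by rw [vars_X]; decide)))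
    · exact ((vars_mul _ _).trans (Finset.union_subset ((vars_mul _ _).trans (Finset.union_subset (by simp [vars_C]) ((vars_pow _ _).trans (by rw [vars_X]; decide)))) ((vars_pow _ _).trans (by rw [vars_X]; decide))))
    · exact ((vars_mul _ _).trans (Finset.union_subset ((vars_mul _ _).trans (Finset.union_subset (by simp [vars_C]) ((vars_pow _ _).trans (by rw [vars_X]; decide)))) ((vars_pow _ _).trans (by rw [vars_X]; decide))))
    · exact ((vars_mul _ _).trans (Finset.union_subset ((vars_mul _ _).trans (Finset.union_subset (by simp [vars_C]) ((vars_pow _ _).trans (by rw [vars_X]; decide)))) (by rw [vars_X]; decide)))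
    · exact ((vars_mul _ _).trans (Finset.union_subset (by simp [vars_C]) ((vars_pow _ _).trans (by rw [vars_X]; decide))))
  have hvec : (fun i => aeval (![X 0, X 1 + C c0 * X 0 ^ 6, X 2, X 3] : Fin 4 → P4) (aeval (![X 0, X 1, X 2 + (C q1 * X 0 ^ 2 * X 1 ^ 2 + C q2 * X 0 ^ 8 * X 1 + C q3 * X 0 ^ 14), X 3] : Fin 4 → P4) (aeval (![X 0, X 1, X 2, X 3 + (C p1 * X 0 * X 1 * X 2 + C p2 * X 0 ^ 7 * X 2 + C p3 * X 0 ^ 3 * X 1 ^ 3 + C p4 * X 0 ^ 9 * X 1 ^ 2 + C p5 * X 0 ^ 15 * X 1 + C p6 * X 0 ^ 21)] : Fin 4 → P4) ((![X 0, C mu * X 1, C nu * X 2, X 3] : Fin 4 → P4) i))))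
      = (![C 1 * X 0, C mu * X 1 + C cB * X 0 ^ 6, C nu * X 2 + qp, C 1 * X 3 + pp] : Fin 4 → P4) := by
    funext i
    fin_cases i
    · simp only [Fin.zero_eta, Fin.mk_one, Fin.isValue, show (⟨2, by norm_num⟩ : Fin 4) = 2 from rfl, show (⟨3, by norm_num⟩ : Fin 4) = 3 from rfl, one_mul, map_add, map_mul, map_pow, aeval_C, aeval_X, algebraMap_eq, C_1, Matrix.cons_val_zero, Matrix.cons_val_one, Matrix.head_cons, Matrix.cons_val_two, Matrix.cons_val_three, Matrix.tail_cons]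
    · simp only [Fin.zero_eta, Fin.mk_one, Fin.isValue, show (⟨2, by norm_num⟩ : Fin 4) = 2 from rfl, show (⟨3, by norm_num⟩ : Fin 4) = 3 from rfl, one_mul, map_add, map_mul, map_pow, aeval_C, aeval_X, algebraMap_eq, C_1, Matrix.cons_val_zero, Matrix.cons_val_one, Matrix.head_cons, Matrix.cons_val_two, Matrix.cons_val_three, Matrix.tail_cons]
      linear_combination (norm := ring1) -(X 0 ^ 6) * h_cBC
    · simp only [Fin.zero_eta, Fin.mk_one, Fin.isValue, show (⟨2, by norm_num⟩ : Fin 4) = 2 from rfl, show (⟨3, by norm_num⟩ : Fin 4) = 3 from rfl, one_mul, map_add, map_mul, map_pow, aeval_C, aeval_X, algebraMap_eq, C_1, Matrix.cons_val_zero, Matrix.cons_val_one, Matrix.head_cons, Matrix.cons_val_two, Matrix.cons_val_three, Matrix.tail_cons]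
      rw [hqp]
      linear_combination (norm := ring1) -(X 0 ^ 2 * X 1 ^ 2) * h_qq1C + -(X 0 ^ 8 * X 1) * h_qq2C + -(X 0 ^ 14) * h_qq3C
    · simp only [Fin.zero_eta, Fin.mk_one, Fin.isValue, show (⟨2, by norm_num⟩ : Fin 4) = 2 from rfl, show (⟨3, by norm_num⟩ : Fin 4) = 3 from rfl, one_mul, map_add, map_mul, map_pow, aeval_C, aeval_X, algebraMap_eq, C_1, Matrix.cons_val_zero, Matrix.cons_val_one, Matrix.head_cons, Matrix.cons_val_two, Matrix.cons_val_three, Matrix.tail_cons]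
      rw [hpp]
      linear_combination (norm := ring1) -(X 0 * X 1 * X 2) * h_pp1C + -(X 0 ^ 7 * X 2) * h_pp2C + -(X 0 ^ 3 * X 1 ^ 3) * h_pp3C + -(X 0 ^ 9 * X 1 ^ 2) * h_pp4C + -(X 0 ^ 15 * X 1) * h_pp5C + -(X 0 ^ 21) * h_pp6C
  refine ⟨1, mu, nu, 1, cB, az2, qp, pp, tv t0 t1 t2 t3 t4 t5 t6 t7 t8 t9 t10,
    one_ne_zero, hmu0, hnu0, one_ne_zero, hz0, hqw, hqv, hpw, hpv, ?_⟩
  rw [← hvec, ← aeval_four]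
  rw [hS, hZ, hY, hX]
end

section
/- Let v = (1/7, 2/7, 3/7, 4/7, 5/7, 6/7, 1, 2/3, 1/3, 1/2) ∈ ℚ¹⁰. Then v is the unique vector in ℚ¹⁰ with v₆ = 1 such that (G·v)_j = 0 for every j ≠ 6; moreover G·v = (1/42)·e₆, and hence vᵀ·G·v = 1/42. (Geometrically: on the minimal resolution, the pullback of the boundary curve D = π(Θ₆) is π*D = (1/7)Θ₀ + (2/7)Θ₁ + (3/7)Θ₂ + (4/7)Θ₃ + (5/7)Θ₄ + (6/7)Θ₅ + Θ₆ + (2/3)Θ₇ + (1/3)Θ₈ + (1/2)Θ₉, and D² = (π*D)² = 1/42, which is the minimal volume (K_X+D)² = 1/42 of Theorem 1.3(2).) -/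
open Matrix

/-- The Gram matrix (over `ℚ`) of the `T_{2,3,7}` configuration of ten `(-2)`-curves
`Θ₀, …, Θ₉`: a chain `Θ₀–Θ₁–⋯–Θ₈` with `Θ₉` attached to `Θ₆`. -/
def T237GramQ : Matrix (Fin 10) (Fin 10) ℚ := Matrix.of fun i j =>
  if i = j then -2
  else if (i.val + 1 = j.val ∧ j.val ≤ 8) ∨ (j.val + 1 = i.val ∧ i.val ≤ 8) then 1
  else if (i.val = 6 ∧ j.val = 9) ∨ (i.val = 9 ∧ j.val = 6) then 1
  else 0

/-- The coefficient vector of the pullback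
`π*D = (1/7)Θ₀ + (2/7)Θ₁ + (3/7)Θ₂ + (4/7)Θ₃ + (5/7)Θ₄ + (6/7)Θ₅ + Θ₆ + (2/3)Θ₇
     + (1/3)Θ₈ + (1/2)Θ₉`. -/
def pullbackD : Fin 10 → ℚ := ![1/7, 2/7, 3/7, 4/7, 5/7, 6/7, 1, 2/3, 1/3, 1/2]

lemma sum10 (f : Fin 10 → ℚ) : ∑ i, f i =
    f 0 + f 1 + f 2 + f 3 + f 4 + f 5 + f 6 + f 7 + f 8 + f 9 := by
  rw [Fin.sum_univ_castSucc, Fin.sum_univ_castSucc, Fin.sum_univ_eight]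
  rfl

lemma mv' (v : Fin 10 → ℚ) (j : Fin 10) :
    T237GramQ.mulVec v j =
      T237GramQ j 0 * v 0 + T237GramQ j 1 * v 1 + T237GramQ j 2 * v 2 +
      T237GramQ j 3 * v 3 + T237GramQ j 4 * v 4 + T237GramQ j 5 * v 5 +
      T237GramQ j 6 * v 6 + T237GramQ j 7 * v 7 + T237GramQ j 8 * v 8 +
      T237GramQ j 9 * v 9 := by
  show (∑ i, T237GramQ j i * v i) = _
  exact sum10 _

lemma val0 : ((0:Fin 10):ℕ) = 0 := rfl
lemma val1 : ((1:Fin 10):ℕ) = 1 := rfl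
lemma val2 : ((2:Fin 10):ℕ) = 2 := rfl
lemma val3 : ((3:Fin 10):ℕ) = 3 := rfl
lemma val4 : ((4:Fin 10):ℕ) = 4 := rfl
lemma val5 : ((5:Fin 10):ℕ) = 5 := rfl
lemma val6 : ((6:Fin 10):ℕ) = 6 := rfl
lemma val7 : ((7:Fin 10):ℕ) = 7 := rfl
lemma val8 : ((8:Fin 10):ℕ) = 8 := rfl
lemma val9 : ((9:Fin 10):ℕ) = 9 := rfl

lemma pd0 : pullbackD 0 = 1/7 := rfl
lemma pd1 : pullbackD 1 = 2/7 := rfl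
lemma pd2 : pullbackD 2 = 3/7 := rfl
lemma pd3 : pullbackD 3 = 4/7 := rfl
lemma pd4 : pullbackD 4 = 5/7 := rfl
lemma pd5 : pullbackD 5 = 6/7 := rfl
lemma pd6 : pullbackD 6 = 1 := rfl
lemma pd7 : pullbackD 7 = 2/3 := rfl
lemma pd8 : pullbackD 8 = 1/3 := rfl
lemma pd9 : pullbackD 9 = 1/2 := rfl


/-- `pullbackD` is the unique vector `v ∈ ℚ¹⁰` with `v₆ = 1` and `(G·v)ⱼ = 0` for `j ≠ 6`;
moreover `G·v = (1/42)·e₆`, hence `vᵀ·G·v = 1/42`, the minimal volume `(K_X + D)²`. -/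
theorem statement14 :
    pullbackD 6 = 1 ∧
    (∀ j : Fin 10, j ≠ 6 → T237GramQ.mulVec pullbackD j = 0) ∧
    (∀ v : Fin 10 → ℚ, v 6 = 1 → (∀ j : Fin 10, j ≠ 6 → T237GramQ.mulVec v j = 0) →
      v = pullbackD) ∧
    T237GramQ.mulVec pullbackD = (1/42 : ℚ) • (Pi.single (6 : Fin 10) (1 : ℚ) : Fin 10 → ℚ) ∧
    pullbackD ⬝ᵥ T237GramQ.mulVec pullbackD = 1/42 := by
  have key : T237GramQ.mulVec pullbackD = (1/42 : ℚ) • (Pi.single (6 : Fin 10) (1 : ℚ) : Fin 10 → ℚ) := by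
    funext j
    rw [mv']
    fin_cases j <;>
      norm_num [T237GramQ, pd0,pd1,pd2,pd3,pd4,pd5,pd6,pd7,pd8,pd9, Pi.single_apply, Fin.ext_iff,
        val0, val1, val2, val3, val4, val5, val6, val7, val8, val9]
  refine ⟨pd6, ?_, ?_, key, ?_⟩
  · intro j hj
    rw [key]
    simp [Pi.single_apply, hj]
  · intro v h6 hv
    have e0 := hv 0 (by decide); have e1 := hv 1 (by decide)
    have e2 := hv 2 (by decide); have e3 := hv 3 (by decide)
    have e4 := hv 4 (by decide); have e5 := hv 5 (by decide)
    have e7 := hv 7 (by decide); have e8 := hv 8 (by decide)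
    have e9 := hv 9 (by decide)
    rw [mv'] at e0 e1 e2 e3 e4 e5 e7 e8 e9
    norm_num [T237GramQ, Fin.ext_iff,
      val0, val1, val2, val3, val4, val5, val6, val7, val8, val9]
      at e0 e1 e2 e3 e4 e5 e7 e8 e9
    have h0 : v 0 = 1/7 := by linarith
    have h1 : v 1 = 2/7 := by linarith
    have h2 : v 2 = 3/7 := by linarith
    have h3 : v 3 = 4/7 := by linarith
    have h4 : v 4 = 5/7 := by linarith
    have h5 : v 5 = 6/7 := by linarith
    have h7 : v 7 = 2/3 := by linarith
    have h8 : v 8 = 1/3 := by linarith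
    have h9 : v 9 = 1/2 := by linarith
    funext i
    fin_cases i
    · exact h0
    · exact h1
    · exact h2
    · exact h3
    · exact h4
    · exact h5
    · exact h6
    · exact h7
    · exact h8
    · exact h9
  · rw [key]
    rw [dotProduct, sum10]
    norm_num [pd0,pd1,pd2,pd3,pd4,pd5,pd6,pd7,pd8,pd9, Pi.single_apply, Fin.ext_iff,
      val0, val1, val2, val3, val4, val5, val6, val7, val8, val9]
end

section
/- Let c = (1/13, 2/13, 3/13, 4/13, 5/13, 6/13, 0, 6/11, 4/11, 2/11, 3/11) ∈ ℚ¹¹. Then c is the unique vector in ℚ¹¹ with c₆ = 0 such that (κ + M·c)_j = 0 for every index j ≠ 6; moreover (κ + M·c)₆ = 1/143 and −1 + κᵀ·c = 1/143. (Geometrically: on the minimal resolution X̃, which has K_{X̃}² = −1, writing π*K_X = K_{X̃} + Σ cᵢ·Cᵢ over the eleven curves C₀,…,C₁₀ = Θ̃₀,…,Θ̃₅, E, Θ̃₆, Θ̃₇, Θ̃₈, Θ̃₉, the discrepancy coefficients are exactly c, and K_X² = K_{X̃}² + κᵀ·c = 1/143, the minimal volume of stable surfaces with p_g = 1.) -/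
open Matrix

/-- The intersection matrix of the eleven curves `Θ̃₀,…,Θ̃₅, E, Θ̃₆, Θ̃₇, Θ̃₈, Θ̃₉`
(indices `0–10`) on the minimal resolution `X̃`: the chain `Θ̃₀–⋯–Θ̃₅–E–Θ̃₆–Θ̃₇–Θ̃₈` with
`Θ̃₉` attached to `Θ̃₆`, self-intersections `-2` except `Θ̃₅² = Θ̃₆² = -3` and `E² = -1`. -/
def MGram : Matrix (Fin 11) (Fin 11) ℚ := Matrix.of fun i j =>
  if i = j then
    (if i.val ≤ 4 then -2
     else if i.val = 5 then -3
     else if i.val = 6 then -1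
     else if i.val = 7 then -3
     else -2)
  else if (i.val + 1 = j.val ∧ j.val ≤ 9) ∨ (j.val + 1 = i.val ∧ i.val ≤ 9) then 1
  else if (i.val = 7 ∧ j.val = 10) ∨ (i.val = 10 ∧ j.val = 7) then 1
  else 0

/-- The vector `κ` of intersection numbers of the canonical class with the eleven curves:
`K·C = -2 - C²` for a smooth rational curve `C`. -/
def kappa : Fin 11 → ℚ := ![0, 0, 0, 0, 0, 1, -1, 1, 0, 0, 0]

/-- The discrepancy coefficients of `π*K_X = K_{X̃} + Σ cᵢ Cᵢ`. -/
def cvec : Fin 11 → ℚ := ![1/13, 2/13, 3/13, 4/13, 5/13, 6/13, 0, 6/11, 4/11, 2/11, 3/11]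

set_option maxHeartbeats 2000000

lemma fv0 : ((0:Fin 11):ℕ) = 0 := rfl
lemma fv1 : ((1:Fin 11):ℕ) = 1 := rfl
lemma fv2 : ((2:Fin 11):ℕ) = 2 := rfl
lemma fv3 : ((3:Fin 11):ℕ) = 3 := rfl
lemma fv4 : ((4:Fin 11):ℕ) = 4 := rfl
lemma fv5 : ((5:Fin 11):ℕ) = 5 := rfl
lemma fv6 : ((6:Fin 11):ℕ) = 6 := rfl
lemma fv7 : ((7:Fin 11):ℕ) = 7 := rfl
lemma fv8 : ((8:Fin 11):ℕ) = 8 := rfl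
lemma fv9 : ((9:Fin 11):ℕ) = 9 := rfl
lemma fv10 : ((10:Fin 11):ℕ) = 10 := rfl

lemma sc3 : (Fin.succ ((2:Fin 10)) : Fin 11) = 3 := rfl
lemma sc4 : (Fin.succ (Fin.succ ((2:Fin 9))) : Fin 11) = 4 := rfl
lemma sc5 : (Fin.succ (Fin.succ (Fin.succ ((2:Fin 8)))) : Fin 11) = 5 := rfl
lemma sc6 : (Fin.succ (Fin.succ (Fin.succ (Fin.succ ((2:Fin 7))))) : Fin 11) = 6 := rfl
lemma sc7 : (Fin.succ (Fin.succ (Fin.succ (Fin.succ (Fin.succ ((2:Fin 6)))))) : Fin 11) = 7 := rfl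
lemma sc8 : (Fin.succ (Fin.succ (Fin.succ (Fin.succ (Fin.succ (Fin.succ ((2:Fin 5))))))) : Fin 11) = 8 := rfl
lemma sc9 : (Fin.succ (Fin.succ (Fin.succ (Fin.succ (Fin.succ (Fin.succ (Fin.succ ((2:Fin 4)))))))) : Fin 11) = 9 := rfl
lemma sc10 : (Fin.succ (Fin.succ (Fin.succ (Fin.succ (Fin.succ (Fin.succ (Fin.succ (Fin.succ ((2:Fin 3))))))))) : Fin 11) = 10 := rfl
lemma kv0 : (![0, 0, 0, 0, 0, 1, -1, 1, 0, 0, 0] : Fin 11 → ℚ) 0 = 0 := rfl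
lemma kv1 : (![0, 0, 0, 0, 0, 1, -1, 1, 0, 0, 0] : Fin 11 → ℚ) 1 = 0 := rfl
lemma kv2 : (![0, 0, 0, 0, 0, 1, -1, 1, 0, 0, 0] : Fin 11 → ℚ) 2 = 0 := rfl
lemma kv3 : (![0, 0, 0, 0, 0, 1, -1, 1, 0, 0, 0] : Fin 11 → ℚ) 3 = 0 := rfl
lemma kv4 : (![0, 0, 0, 0, 0, 1, -1, 1, 0, 0, 0] : Fin 11 → ℚ) 4 = 0 := rfl
lemma kv5 : (![0, 0, 0, 0, 0, 1, -1, 1, 0, 0, 0] : Fin 11 → ℚ) 5 = 1 := rfl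
lemma kv6 : (![0, 0, 0, 0, 0, 1, -1, 1, 0, 0, 0] : Fin 11 → ℚ) 6 = -1 := rfl
lemma kv7 : (![0, 0, 0, 0, 0, 1, -1, 1, 0, 0, 0] : Fin 11 → ℚ) 7 = 1 := rfl
lemma kv8 : (![0, 0, 0, 0, 0, 1, -1, 1, 0, 0, 0] : Fin 11 → ℚ) 8 = 0 := rfl
lemma kv9 : (![0, 0, 0, 0, 0, 1, -1, 1, 0, 0, 0] : Fin 11 → ℚ) 9 = 0 := rfl
lemma kv10 : (![0, 0, 0, 0, 0, 1, -1, 1, 0, 0, 0] : Fin 11 → ℚ) 10 = 0 := rfl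

lemma cv0 : cvec 0 = 1/13 := rfl
lemma cv1 : cvec 1 = 2/13 := rfl
lemma cv2 : cvec 2 = 3/13 := rfl
lemma cv3 : cvec 3 = 4/13 := rfl
lemma cv4 : cvec 4 = 5/13 := rfl
lemma cv5 : cvec 5 = 6/13 := rfl
lemma cv6 : cvec 6 = 0 := rfl
lemma cv7 : cvec 7 = 6/11 := rfl
lemma cv8 : cvec 8 = 4/11 := rfl
lemma cv9 : cvec 9 = 2/11 := rfl
lemma cv10 : cvec 10 = 3/11 := rfl

/-- `cvec` is the unique vector `c ∈ ℚ¹¹` with `c₆ = 0` and `(κ + M·c)ⱼ = 0` for `j ≠ 6`;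
moreover `(κ + M·c)₆ = 1/143` and `K_X² = K_{X̃}² + κᵀ·c = -1 + κᵀ·c = 1/143`, the minimal
volume of stable surfaces with `p_g = 1`. -/
theorem statement15 :
    cvec 6 = 0 ∧
    (∀ j : Fin 11, j ≠ 6 → (kappa + MGram.mulVec cvec) j = 0) ∧
    (∀ c : Fin 11 → ℚ, c 6 = 0 → (∀ j : Fin 11, j ≠ 6 → (kappa + MGram.mulVec c) j = 0) →
      c = cvec) ∧
    (kappa + MGram.mulVec cvec) 6 = 1/143 ∧
    -1 + kappa ⬝ᵥ cvec = 1/143 := by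

  refine ⟨rfl, ?_, ?_, ?_, ?_⟩
  · intro j hj
    fin_cases j <;> simp_all <;>
      simp [MGram, kappa, cvec, mulVec, dotProduct, Fin.sum_univ_succ] <;> norm_num
  · intro c h6 h
    have h0 := h 0 (by decide); have h1 := h 1 (by decide); have h2 := h 2 (by decide)
    have h3 := h 3 (by decide); have h4 := h 4 (by decide); have h5 := h 5 (by decide)
    have h7 := h 7 (by decide); have h8 := h 8 (by decide); have h9 := h 9 (by decide)
    have h10 := h 10 (by decide)
    simp only [Pi.add_apply, MGram, kappa, mulVec, dotProduct, Fin.sum_univ_succ,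
      Fin.sum_univ_zero, Matrix.of_apply, Fin.ext_iff, Matrix.cons_val_zero,
      Matrix.cons_val_one, Matrix.head_cons, Fin.val_succ,
      fv0,fv1,fv2,fv3,fv4,fv5,fv6,fv7,fv8,fv9,fv10,sc3,sc4,sc5,sc6,sc7,sc8,sc9,sc10,kv0,kv1,kv2,kv3,kv4,kv5,kv6,kv7,kv8,kv9,kv10] at h0 h1 h2 h3 h4 h5 h7 h8 h9 h10
    norm_num at h0 h1 h2 h3 h4 h5 h7 h8 h9 h10
    simp only [sc3,sc4,sc5,sc6,sc7,sc8,sc9,sc10] at h0 h1 h2 h3 h4 h5 h7 h8 h9 h10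
    funext j
    fin_cases j <;> simp [cv0,cv1,cv2,cv3,cv4,cv5,cv6,cv7,cv8,cv9,cv10] <;> linarith
  · simp only [Pi.add_apply, MGram, kappa, mulVec, dotProduct, Fin.sum_univ_succ,
      Fin.sum_univ_zero, Matrix.of_apply, Fin.ext_iff, Fin.val_succ,
      fv0,fv1,fv2,fv3,fv4,fv5,fv6,fv7,fv8,fv9,fv10,
      kv0,kv1,kv2,kv3,kv4,kv5,kv6,kv7,kv8,kv9,kv10]
    norm_num [sc3,sc4,sc5,sc6,sc7,sc8,sc9,sc10,cv0,cv1,cv2,cv3,cv4,cv5,cv6,cv7,cv8,cv9,cv10]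
  · norm_num [kappa, cvec, dotProduct, Fin.sum_univ_succ]
end
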